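/- arXiv:math/0303095 — 11 statements merged into one kernel-verified Lean document; each statement's English description precedes it below -/
import Mathlib

section
/- Let G be a real symmetric 2×2 matrix with det G < 0, so that g(u,v) = uᵀGv is a Lorentzian inner product on ℝ², and let A be a real 2×2 matrix with AᵀG = GA and det A = 1. If tr A > 2, then there exists exactly one real 2×2 matrix a with aᵀG = Ga and exp(a) = A; moreover this a satisfies tr a = 0 and det a < 0 (so the unique geodesic t ↦ g(exp(ta)·,·) joining g and g(A·,·) in the space of Lorentzian inner products with fixed volume form is timelike). -/
open Matrix NormedSpace Nat

private abbrev M2 := Matrix (Fin 2) (Fin 2) ℝ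

private lemma exp_idem (P : M2) (h : P * P = P) (c : ℝ) :
    NormedSpace.exp (c • P) = 1 + (Real.exp c - 1) • P := by
  letI : SeminormedRing M2 := Matrix.linftyOpSemiNormedRing
  letI : NormedRing M2 := Matrix.linftyOpNormedRing
  letI : NormedAlgebra ℝ M2 := Matrix.linftyOpNormedAlgebra
  have hpow : ∀ n : ℕ, P ^ (n + 1) = P := by
    intro n
    induction n with
    | zero => simp
    | succ n ih => rw [pow_succ, ih, h]
  have hsum : Summable fun n : ℕ => ((n ! : ℝ)⁻¹) • (c • P) ^ n :=
    expSeries_summable' (𝕂 := ℝ) _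
  have hterm : ∀ n : ℕ, (((n+1) ! : ℝ)⁻¹) • (c • P) ^ (n+1)
      = ((((n+1) ! : ℝ)⁻¹) * c ^ (n+1)) • P := by
    intro n
    rw [smul_pow, hpow, smul_smul]
  have hsumR : Summable fun n : ℕ => ((n ! : ℝ)⁻¹) • c ^ n :=
    expSeries_summable' (𝕂 := ℝ) _
  have hsumR' : Summable fun n : ℕ => (((n+1) ! : ℝ)⁻¹) * c ^ (n+1) := by
    have := (summable_nat_add_iff 1).2 hsumR
    simpa [smul_eq_mul] using this
  have hR : (∑' n : ℕ, (((n+1) ! : ℝ)⁻¹) * c ^ (n+1)) = Real.exp c - 1 := by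
    have h1 : Real.exp c = ∑' n : ℕ, ((n ! : ℝ)⁻¹) • c ^ n := by
      rw [Real.exp_eq_exp_ℝ, exp_eq_tsum ℝ]
    rw [Summable.tsum_eq_zero_add hsumR] at h1
    simp only [smul_eq_mul] at h1 ⊢
    simp at h1
    linarith [h1]
  calc NormedSpace.exp (c • P) = ∑' n : ℕ, ((n ! : ℝ)⁻¹) • (c • P) ^ n := by rw [exp_eq_tsum ℝ]
    _ = ((0 ! : ℝ)⁻¹) • (c • P) ^ 0 + ∑' n : ℕ, (((n+1) ! : ℝ)⁻¹) • (c • P) ^ (n+1) :=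
        Summable.tsum_eq_zero_add hsum
    _ = 1 + ∑' n : ℕ, ((((n+1) ! : ℝ)⁻¹) * c ^ (n+1)) • P := by
        rw [tsum_congr hterm]; simp
    _ = 1 + (∑' n : ℕ, (((n+1) ! : ℝ)⁻¹) * c ^ (n+1)) • P := by
        rw [Summable.tsum_smul_const hsumR']
    _ = 1 + (Real.exp c - 1) • P := by rw [hR]

private lemma exp_comb (P Q : M2) (hP : P * P = P) (hQ : Q * Q = Q)
    (hPQ : P * Q = 0) (hQP : Q * P = 0) (x y : ℝ) :
    NormedSpace.exp (x • P + y • Q) = 1 + (Real.exp x - 1) • P + (Real.exp y - 1) • Q := by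
  have hcomm : Commute (x • P) (y • Q) := by
    show x • P * (y • Q) = y • Q * (x • P)
    rw [smul_mul_assoc, mul_smul_comm, hPQ, smul_mul_assoc, mul_smul_comm, hQP]
    simp
  rw [Matrix.exp_add_of_commute _ _ hcomm, exp_idem P hP, exp_idem Q hQ]
  have h0 : ((Real.exp x - 1) • P) * ((Real.exp y - 1) • Q) = 0 := by
    rw [smul_mul_assoc, mul_smul_comm, hPQ]; simp
  rw [mul_add, mul_one, add_mul, one_mul, h0, add_zero]

private lemma commutant_entries (a b c d p q r s : ℝ)
    (hns : ¬(b = 0 ∧ c = 0 ∧ a = d))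
    (e00 : p * a + q * c = a * p + b * r)
    (e01 : p * b + q * d = a * q + b * s)
    (e10 : r * a + s * c = c * p + d * r) :
    ∃ α β : ℝ, !![p, q; r, s] = α • (1 : M2) + β • !![a, b; c, d] := by
  have key : ∀ α β : ℝ, p = α + β * a → q = β * b → r = β * c → s = α + β * d →
      !![p, q; r, s] = α • (1 : M2) + β • !![a, b; c, d] := by
    intro α β h1 h2 h3 h4
    rw [Matrix.one_fin_two]
    ext i j
    fin_cases i <;> fin_cases j <;> simp [h1, h2, h3, h4]
  by_cases hb : b ≠ 0
  · refine ⟨p - a * q / b, q / b, key _ _ (by field_simp <;> ring) (by field_simp) ?_ ?_⟩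
    · field_simp
      first | linear_combination e00 | linear_combination -e00
    · field_simp
      first | linear_combination e01 | linear_combination -e01
  · push_neg at hb
    by_cases hc : c ≠ 0
    · have hq : q = 0 := by
        have h2 : q * c = 0 := by linear_combination e00 + r * hb
        exact (mul_eq_zero.1 h2).resolve_right hc
      refine ⟨p - a * r / c, r / c, key _ _ (by field_simp <;> ring) (by simp [hq, hb]) (by field_simp) ?_⟩
      field_simp
      first | linear_combination e10 | linear_combination -e10
    · push_neg at hc
      have had : a ≠ d := fun hh => hns ⟨hb, hc, hh⟩
      have hd : a - d ≠ 0 := sub_ne_zero.2 had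
      have hq : q = 0 := by
        have h2 : q * (d - a) = 0 := by linear_combination e01 - (p - s) * hb
        rcases mul_eq_zero.1 h2 with h3 | h3
        · exact h3
        · exact absurd (by linarith [sub_eq_zero.1 h3]) had
      have hr : r = 0 := by
        have h2 : r * (a - d) = 0 := by linear_combination e10 + (p - s) * hc
        exact (mul_eq_zero.1 h2).resolve_right hd
      exact ⟨p - (p - s) / (a - d) * a, (p - s) / (a - d),
        key _ _ (by ring) (by simp [hq, hb]) (by simp [hr, hc]) (by field_simp; ring)⟩

private lemma commutant (Y X : M2) (hY : ∀ r : ℝ, Y ≠ r • (1 : M2))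
    (h : X * Y = Y * X) : ∃ α β : ℝ, X = α • (1 : M2) + β • Y := by
  have e := fun i j => congrFun (congrFun h i) j
  simp only [Matrix.mul_apply, Fin.sum_univ_two] at e
  have hns : ¬(Y 0 1 = 0 ∧ Y 1 0 = 0 ∧ Y 0 0 = Y 1 1) := by
    rintro ⟨h1, h2, h3⟩
    refine hY (Y 1 1) ?_
    ext i j
    fin_cases i <;> fin_cases j <;> simp [Matrix.one_apply, h1, h2, h3]
  obtain ⟨α, β, hmat⟩ := commutant_entries (Y 0 0) (Y 0 1) (Y 1 0) (Y 1 1)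
    (X 0 0) (X 0 1) (X 1 0) (X 1 1) hns (e 0 0) (e 0 1) (e 1 0)
  refine ⟨α, β, ?_⟩
  calc X = !![X 0 0, X 0 1; X 1 0, X 1 1] := Matrix.eta_fin_two X
    _ = α • (1 : M2) + β • !![Y 0 0, Y 0 1; Y 1 0, Y 1 1] := hmat
    _ = α • (1 : M2) + β • Y := by rw [← Matrix.eta_fin_two Y]

private lemma sq_fin_two (M : M2) : M * M = M.trace • M - M.det • 1 := by
  ext i j
  fin_cases i <;> fin_cases j <;>
    simp [Matrix.mul_apply, Fin.sum_univ_two, Matrix.trace_fin_two, Matrix.det_fin_two,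
      Matrix.one_apply] <;> ring

set_option maxHeartbeats 1000000 in
/-- For a Lorentzian inner product `g(u,v) = uᵀGv` on `ℝ²` and a `g`-symmetric
matrix `A` with `det A = 1` and `tr A > 2`, there is exactly one `g`-symmetric matrix `a`
with `exp a = A`; moreover it satisfies `tr a = 0` and `det a < 0` (timelike geodesic). -/
theorem timelike_geodesic_unique (G A : Matrix (Fin 2) (Fin 2) ℝ)
    (hGsymm : Gᵀ = G) (hGdet : G.det < 0)
    (hAsymm : Aᵀ * G = G * A) (hAdet : A.det = 1)
    (htr : 2 < A.trace) :
    (∃! a : Matrix (Fin 2) (Fin 2) ℝ, aᵀ * G = G * a ∧ NormedSpace.exp a = A) ∧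
      ∀ a : Matrix (Fin 2) (Fin 2) ℝ, aᵀ * G = G * a → NormedSpace.exp a = A →
        a.trace = 0 ∧ a.det < 0 := by
  set t := A.trace with ht
  have ht2 : (0:ℝ) < t ^ 2 - 4 := by nlinarith
  set s := Real.sqrt (t ^ 2 - 4) with hsdef
  have hs : 0 < s := Real.sqrt_pos.2 ht2
  have hss : s * s = t ^ 2 - 4 := by
    have := Real.sq_sqrt ht2.le
    rw [← hsdef] at this
    nlinarith [this]
  set lam := (t + s) / 2 with hlamdef
  have hlam1 : 1 < lam := by rw [hlamdef]; linarith
  have hlam0 : 0 < lam := by linarith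
  have hlaminv : lam⁻¹ = (t - s) / 2 := by
    have hmul : lam * ((t - s) / 2) = 1 := by
      rw [hlamdef]; field_simp; nlinarith [hss]
    exact inv_eq_of_mul_eq_one_right hmul
  set μ := Real.log lam with hmudef
  have hμpos : 0 < μ := Real.log_pos hlam1
  have hexpμ : Real.exp μ = lam := Real.exp_log hlam0
  have hexpnegμ : Real.exp (-μ) = lam⁻¹ := by rw [Real.exp_neg, hexpμ]
  have hAsq : A * A = t • A - (1 : M2) := by
    have h1 := sq_fin_two A
    rw [hAdet, ← ht, one_smul] at h1
    exact h1
  set N : M2 := s⁻¹ • ((2:ℝ) • A - t • 1) with hNdef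
  have expand : ((2:ℝ) • A - t • 1) * ((2:ℝ) • A - t • 1) = (t ^ 2 - 4) • (1 : M2) := by
    simp only [sub_mul, mul_sub, smul_mul_assoc, mul_smul_comm, one_mul, mul_one,
      smul_smul, hAsq]
    module
  have hNN : N * N = 1 := by
    rw [hNdef, smul_mul_assoc, mul_smul_comm, smul_smul, expand, smul_smul]
    rw [show s⁻¹ * s⁻¹ * (t ^ 2 - 4) = 1 by
      rw [show (t ^ 2 - 4 : ℝ) = s * s from by linarith]; field_simp]
    rw [one_smul]
  set Pm : M2 := (2:ℝ)⁻¹ • ((1 : M2) + N) with hPdef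
  set Qm : M2 := (2:ℝ)⁻¹ • ((1 : M2) - N) with hQdef
  have hPP : Pm * Pm = Pm := by
    rw [hPdef]
    simp only [smul_mul_assoc, mul_smul_comm, add_mul, mul_add, one_mul, mul_one,
      smul_smul, hNN]
    module
  have hQQ : Qm * Qm = Qm := by
    rw [hQdef]
    simp only [smul_mul_assoc, mul_smul_comm, sub_mul, mul_sub, one_mul, mul_one,
      smul_smul, hNN]
    module
  have hPQ : Pm * Qm = 0 := by
    rw [hPdef, hQdef]
    simp only [smul_mul_assoc, mul_smul_comm, add_mul, mul_add, sub_mul, mul_sub, one_mul,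
      mul_one, smul_smul, hNN]
    module
  have hQP : Qm * Pm = 0 := by
    rw [hPdef, hQdef]
    simp only [smul_mul_assoc, mul_smul_comm, add_mul, mul_add, sub_mul, mul_sub, one_mul,
      mul_one, smul_smul, hNN]
    module
  have hsplit : μ • N = μ • Pm + (-μ) • Qm := by rw [hPdef, hQdef]; module
  have hexpa : NormedSpace.exp (μ • N) = A := by
    rw [hsplit, exp_comb Pm Qm hPP hQQ hPQ hQP, hexpμ, hexpnegμ, hlaminv, hPdef, hQdef,
      hNdef, hlamdef]
    match_scalars <;> · field_simp; ring
  have hNsymmG : Nᵀ * G = G * N := by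
    rw [hNdef, transpose_smul, transpose_sub, transpose_smul, transpose_smul, transpose_one,
      smul_mul_assoc, mul_smul_comm, sub_mul, mul_sub, smul_mul_assoc, smul_mul_assoc,
      mul_smul_comm, mul_smul_comm, one_mul, mul_one, hAsymm]
  have hasymm : (μ • N)ᵀ * G = G * (μ • N) := by
    rw [transpose_smul, smul_mul_assoc, mul_smul_comm, hNsymmG]
  have htrN : N.trace = 0 := by
    rw [hNdef, trace_smul, trace_sub, trace_smul, trace_smul, trace_one, ← ht]
    simp [smul_eq_mul]
    exact Or.inr (by ring)
  have htra : (μ • N).trace = 0 := by rw [trace_smul, htrN, smul_eq_mul, mul_zero]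
  have hdetsub : ((2:ℝ) • A - t • 1).det = 4 - t ^ 2 := by
    have hAdet' : A 0 0 * A 1 1 - A 0 1 * A 1 0 = 1 := by
      rw [det_fin_two] at hAdet; linarith
    have ht' : t = A 0 0 + A 1 1 := by rw [ht, trace_fin_two]
    rw [det_fin_two]
    simp only [Matrix.sub_apply, Matrix.smul_apply, Matrix.one_apply, smul_eq_mul]
    norm_num
    linear_combination 4 * hAdet' + 2 * t * ht'
  have hdetN : N.det = -1 := by
    have hsne : s ≠ 0 := ne_of_gt hs
    rw [hNdef, det_smul, hdetsub, show (4 - t ^ 2 : ℝ) = -(s * s) from by linarith]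
    simp only [Fintype.card_fin]
    field_simp
  have hdeta : (μ • N).det < 0 := by
    rw [det_smul, hdetN]
    simp only [Fintype.card_fin, smul_eq_mul]
    nlinarith [hμpos]
  have huniq : ∀ b : M2, NormedSpace.exp b = A → b = μ • N := by
    intro b hexpb
    have hbA : b * A = A * b := by
      letI : SeminormedRing M2 := Matrix.linftyOpSemiNormedRing
      letI : NormedRing M2 := Matrix.linftyOpNormedRing
      letI : NormedAlgebra ℝ M2 := Matrix.linftyOpNormedAlgebra
      have hcom := (Commute.refl b).exp_right
      rw [hexpb] at hcom
      exact hcom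
    have hbN : b * N = N * b := by
      rw [hNdef, mul_smul_comm, smul_mul_assoc]
      congr 1
      rw [mul_sub, sub_mul, mul_smul_comm, smul_mul_assoc, hbA, mul_smul_comm,
        smul_mul_assoc, mul_one, one_mul]
    have hNns : ∀ r : ℝ, N ≠ r • (1 : M2) := by
      intro r hr
      have h3 := htrN
      rw [hr, trace_smul, trace_one] at h3
      have hr0 : r = 0 := by
        simp only [smul_eq_mul, Fintype.card_fin] at h3
        norm_num at h3
        exact h3
      rw [hr0, zero_smul] at hr
      have h4 := hNN
      rw [hr, zero_mul] at h4
      have h5 := congrFun (congrFun h4 0) 0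
      simp [Matrix.one_apply] at h5
    have hcN : (b - μ • N) * N = N * (b - μ • N) := by
      simp only [sub_mul, mul_sub, smul_mul_assoc, mul_smul_comm, smul_sub, smul_smul, hbN]
    obtain ⟨α, β, hc⟩ := commutant N (b - μ • N) hNns hcN
    have hcomab : Commute (b - μ • N) (μ • N) := by
      show _ * _ = _ * _
      simp only [sub_mul, mul_sub, smul_mul_assoc, mul_smul_comm, smul_sub, smul_smul, hbN]
    have hexpc : NormedSpace.exp (b - μ • N) * A = 1 * A := by
      rw [one_mul]
      calc NormedSpace.exp (b - μ • N) * A = NormedSpace.exp (b - μ • N) * NormedSpace.exp (μ • N) := by rw [hexpa]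
        _ = NormedSpace.exp (b - μ • N + μ • N) := (Matrix.exp_add_of_commute _ _ hcomab).symm
        _ = A := by rw [sub_add_cancel, hexpb]
    have hu : IsUnit A := (Matrix.isUnit_iff_isUnit_det A).2 (by rw [hAdet]; exact isUnit_one)
    have hexpc1 : NormedSpace.exp (b - μ • N) = 1 := hu.mul_right_cancel hexpc
    have hc2 : b - μ • N = (α + β) • Pm + (α - β) • Qm := by
      rw [hc, hPdef, hQdef]; module
    rw [hc2, exp_comb Pm Qm hPP hQQ hPQ hQP] at hexpc1
    set x := Real.exp (α + β) - 1 with hxdef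
    set y := Real.exp (α - β) - 1 with hydef
    have hxy : x • Pm + y • Qm = 0 := by
      have h5 : (1 : M2) + (x • Pm + y • Qm) = 1 + 0 := by
        rw [add_zero, ← add_assoc]; exact hexpc1
      exact add_left_cancel h5
    have hlin : ((x + y) / 2) • (1 : M2) + ((x - y) / 2) • N = 0 := by
      rw [← hxy, hPdef, hQdef]; module
    have hveq : x = y := by
      by_contra hne
      have hvne : (x - y) / 2 ≠ 0 := fun hh => hne (by linarith [hh] )
      apply hNns ((-((x + y) / 2)) / ((x - y) / 2))
      have h6 : ((x - y) / 2) • N = (-((x + y) / 2)) • (1 : M2) := by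
        have h7 := neg_eq_of_add_eq_zero_right hlin
        rw [← h7, ← neg_smul]
      calc N = ((x - y) / 2)⁻¹ • (((x - y) / 2) • N) := by
              rw [smul_smul, inv_mul_cancel₀ hvne, one_smul]
        _ = ((x - y) / 2)⁻¹ • ((-((x + y) / 2)) • (1 : M2)) := by rw [h6]
        _ = ((-((x + y) / 2)) / ((x - y) / 2)) • (1 : M2) := by
              rw [smul_smul]
              congr 1
              rw [div_eq_mul_inv]
              ring
    have hx0 : x = 0 := by
      rw [← hveq] at hlin
      have h8 : x • (1 : M2) = 0 := by
        have : ((x + x) / 2) = x := by ring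
        rw [this] at hlin
        simpa using hlin
      have h9 := congrFun (congrFun h8 0) 0
      simpa [Matrix.smul_apply, Matrix.one_apply] using h9
    have hy0 : y = 0 := hveq ▸ hx0
    have hab1 : α + β = 0 := by
      have : Real.exp (α + β) = Real.exp 0 := by rw [Real.exp_zero]; rw [hxdef] at hx0; linarith
      exact Real.exp_injective this
    have hab2 : α - β = 0 := by
      have : Real.exp (α - β) = Real.exp 0 := by rw [Real.exp_zero]; rw [hydef] at hy0; linarith
      exact Real.exp_injective this
    have hα : α = 0 := by linarith
    have hβ : β = 0 := by linarith
    rw [hα, hβ] at hc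
    simp only [zero_smul, add_zero, zero_add] at hc
    exact sub_eq_zero.1 hc
  constructor
  · exact ⟨μ • N, ⟨hasymm, hexpa⟩, fun y hy => huniq y hy.2⟩
  · intro b _ hbe
    rw [huniq b hbe]
    exact ⟨htra, hdeta⟩
end

section
/- Let G be a real symmetric 2×2 matrix with det G < 0, so that g(u,v) = uᵀGv is a Lorentzian inner product on ℝ², and let A be a real 2×2 matrix with AᵀG = GA and det A = 1. If tr A = 2 and A ≠ 1 (identity matrix), then there exists exactly one real 2×2 matrix a with aᵀG = Ga and exp(a) = A, namely a = A − 1; this a satisfies a ≠ 0, tr a = 0 and det a = 0 (so the unique geodesic t ↦ g(exp(ta)·,·) joining g and g(A·,·) is null). -/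
open Matrix NormedSpace

private lemma exp_sq_zero (a : Matrix (Fin 2) (Fin 2) ℝ) (h : a * a = 0) :
    exp a = 1 + a := by
  rw [exp_eq_tsum (𝕂 := ℝ)]
  show (∑' n : ℕ, ((n.factorial : ℝ))⁻¹ • a ^ n) = 1 + a
  rw [tsum_eq_sum (s := ({0, 1} : Finset ℕ)) ?_]
  · norm_num [Finset.sum_pair]
  · intro n hn
    simp only [Finset.mem_insert, Finset.mem_singleton] at hn
    obtain ⟨k, rfl⟩ := Nat.exists_eq_add_of_le (show 2 ≤ n by omega)
    rw [pow_add, pow_two, h, zero_mul, smul_zero]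

private lemma exp_smul_one (α : ℝ) :
    exp (α • (1 : Matrix (Fin 2) (Fin 2) ℝ)) = Real.exp α • 1 := by
  letI : SeminormedRing (Matrix (Fin 2) (Fin 2) ℝ) := Matrix.linftyOpSemiNormedRing
  letI : NormedRing (Matrix (Fin 2) (Fin 2) ℝ) := Matrix.linftyOpNormedRing
  letI : NormedAlgebra ℝ (Matrix (Fin 2) (Fin 2) ℝ) := Matrix.linftyOpNormedAlgebra
  have h2 := (NormedSpace.algebraMap_exp_comm (𝕂 := ℝ) (𝔸 := Matrix (Fin 2) (Fin 2) ℝ) α).symm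
  rw [Algebra.algebraMap_eq_smul_one, Algebra.algebraMap_eq_smul_one] at h2
  rw [← Real.exp_eq_exp_ℝ] at h2
  exact h2

private lemma commutant_s1 (N a : Matrix (Fin 2) (Fin 2) ℝ) (hNtr : N.trace = 0)
    (hNdet : N.det = 0) (hN : N ≠ 0) (hcomm : N * a = a * N) :
    ∃ α β : ℝ, a = α • 1 + β • N := by
  have hw : N 1 1 = -(N 0 0) := by
    rw [Matrix.trace_fin_two] at hNtr; linarith
  have hdet : N 0 0 * N 0 0 + N 0 1 * N 1 0 = 0 := by
    rw [Matrix.det_fin_two, hw] at hNdet; nlinarith [hNdet]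
  have key := fun i j => Matrix.ext_iff.mpr hcomm i j
  have e00 := key 0 0
  have e01 := key 0 1
  have e10 := key 1 0
  simp only [Matrix.mul_apply, Fin.sum_univ_two, hw] at e00 e01 e10
  by_cases hq : N 0 1 ≠ 0
  · refine ⟨a 0 0 - (a 0 1 / N 0 1) * N 0 0, a 0 1 / N 0 1, Matrix.ext fun i j => ?_⟩
    fin_cases i <;> fin_cases j <;>
      simp only [Matrix.add_apply, Matrix.smul_apply, Matrix.one_apply, smul_eq_mul] <;>
      norm_num <;>
      first
        | (field_simp; done)
        | ring1
        | (field_simp; linear_combination e00)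
        | (field_simp; linear_combination -e00)
        | (field_simp; linear_combination e10)
        | (field_simp; linear_combination -e10)
        | (field_simp; linear_combination e01 - a 0 1 * hw)
        | (field_simp; linear_combination -e01 + a 0 1 * hw)
        | (field_simp; linear_combination e01 + a 0 1 * hw)
        | (field_simp; linear_combination -e01 - a 0 1 * hw)
        | (field_simp; linear_combination e10 - a 1 0 * hw)
        | (field_simp; linear_combination -e10 + a 1 0 * hw)
        | (field_simp; linear_combination e10 + a 1 0 * hw)
        | (field_simp; linear_combination -e10 - a 1 0 * hw)
  · push_neg at hq
    by_cases hr : N 1 0 ≠ 0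
    · refine ⟨a 0 0 - (a 1 0 / N 1 0) * N 0 0, a 1 0 / N 1 0, Matrix.ext fun i j => ?_⟩
      fin_cases i <;> fin_cases j <;>
        simp only [Matrix.add_apply, Matrix.smul_apply, Matrix.one_apply, smul_eq_mul] <;>
        norm_num <;>
      first
        | (field_simp; done)
        | ring1
        | (field_simp; linear_combination e00)
        | (field_simp; linear_combination -e00)
        | (field_simp; linear_combination e10)
        | (field_simp; linear_combination -e10)
        | (field_simp; linear_combination e01 - a 0 1 * hw)
        | (field_simp; linear_combination -e01 + a 0 1 * hw)
        | (field_simp; linear_combination e01 + a 0 1 * hw)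
        | (field_simp; linear_combination -e01 - a 0 1 * hw)
        | (field_simp; linear_combination e10 - a 1 0 * hw)
        | (field_simp; linear_combination -e10 + a 1 0 * hw)
        | (field_simp; linear_combination e10 + a 1 0 * hw)
        | (field_simp; linear_combination -e10 - a 1 0 * hw)
    · push_neg at hr
      exfalso
      apply hN
      have hp : N 0 0 = 0 := by nlinarith [hdet, hq, hr]
      ext i j
      fin_cases i <;> fin_cases j <;> simp [hp, hq, hr, hw]

/-- For a Lorentzian inner product `g(u,v) = uᵀGv` on `ℝ²` and a `g`-symmetric
matrix `A` with `det A = 1`, `tr A = 2` and `A ≠ 1`, the unique `g`-symmetric matrix `a` with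
`exp a = A` is `a = A - 1`, which is nonzero, trace-free, and has `det a = 0` (null geodesic). -/
theorem null_geodesic_unique (G A : Matrix (Fin 2) (Fin 2) ℝ)
    (hGsymm : Gᵀ = G) (hGdet : G.det < 0)
    (hAsymm : Aᵀ * G = G * A) (hAdet : A.det = 1)
    (htr : A.trace = 2) (hA : A ≠ 1) :
    (∀ a : Matrix (Fin 2) (Fin 2) ℝ, (aᵀ * G = G * a ∧ exp a = A) ↔ a = A - 1) ∧
      A - 1 ≠ 0 ∧ (A - 1).trace = 0 ∧ (A - 1).det = 0 := by
  have hNtr : (A - 1).trace = 0 := by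
    rw [Matrix.trace_sub, Matrix.trace_one, htr]; norm_num
  have hN2 : (A - 1) * (A - 1) = 0 := by
    rw [Matrix.det_fin_two] at hAdet
    rw [Matrix.trace_fin_two] at htr
    ext i j
    fin_cases i <;> fin_cases j <;>
      · simp only [Matrix.mul_apply, Fin.sum_univ_two, Matrix.sub_apply, Matrix.one_apply,
          Matrix.zero_apply]
        norm_num
        first
          | linear_combination -hAdet + A 0 0 * htr
          | linear_combination A 0 1 * htr
          | linear_combination A 1 0 * htr
          | linear_combination -hAdet + A 1 1 * htr
          | linear_combination hAdet - A 0 0 * htr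
          | linear_combination -(A 0 1) * htr
          | linear_combination -(A 1 0) * htr
          | linear_combination hAdet - A 1 1 * htr
  have hNdet : (A - 1).det = 0 := by
    have h := congrArg Matrix.det hN2
    rw [Matrix.det_mul, Matrix.det_zero] at h
    exact mul_self_eq_zero.mp h
  have hNne : A - 1 ≠ 0 := sub_ne_zero_of_ne hA
  refine ⟨fun a => ⟨fun ⟨hs, he⟩ => ?_, fun h => ?_⟩, hNne, hNtr, hNdet⟩
  · have hcomm : (A - 1) * a = a * (A - 1) := by
      have h1 : exp a * a = a * exp a := ((Commute.refl a).exp_left)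
      rw [he] at h1
      simp only [sub_mul, mul_sub, one_mul, mul_one, h1]
    obtain ⟨α, β, hab⟩ := commutant_s1 (A - 1) a hNtr hNdet hNne hcomm
    have hsq : (β • (A - 1)) * (β • (A - 1)) = 0 := by
      rw [smul_mul_smul_comm, hN2, smul_zero]
    have hcc : Commute (α • (1 : Matrix (Fin 2) (Fin 2) ℝ)) (β • (A - 1)) := by
      simp [Commute, SemiconjBy, smul_mul_assoc, mul_smul_comm, smul_smul, mul_comm]
    have hexp : exp a = Real.exp α • 1 + (Real.exp α * β) • (A - 1) := by
      rw [hab, Matrix.exp_add_of_commute _ _ hcc, exp_smul_one, exp_sq_zero _ hsq,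
        smul_mul_assoc, one_mul, smul_add, smul_smul]
    rw [he] at hexp
    have htrA : Real.exp α * 2 = 2 := by
      have h2 := congrArg Matrix.trace hexp
      rw [htr, Matrix.trace_add, Matrix.trace_smul, Matrix.trace_smul, Matrix.trace_one,
        hNtr] at h2
      simp only [smul_eq_mul, mul_zero, add_zero, Fintype.card_fin, Nat.cast_ofNat] at h2
      linarith [h2]
    have hα : α = 0 := by
      have h3 : Real.exp α = Real.exp 0 := by rw [Real.exp_zero]; linarith
      exact Real.exp_eq_exp.mp h3
    simp only [hα, Real.exp_zero, one_smul, one_mul] at hexp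
    have hx : β • (A - 1) = A - 1 := by
      rw [eq_sub_iff_add_eq, add_comm]
      exact hexp.symm
    rw [hab, hα, zero_smul, zero_add, hx]
  · subst h
    refine ⟨?_, ?_⟩
    · rw [Matrix.transpose_sub, Matrix.transpose_one, sub_mul, mul_sub, one_mul, mul_one, hAsymm]
    · rw [exp_sq_zero _ hN2]; abel
end

section
/- Let G be a real symmetric 2×2 matrix with det G < 0, so that g(u,v) = uᵀGv is a Lorentzian inner product on ℝ², and let A be a real 2×2 matrix with AᵀG = GA and det A = 1. If −2 < tr A < 2, then there exists exactly one real 2×2 matrix a with aᵀG = Ga, exp(a) = A and det a < π²; moreover this a satisfies tr a = 0 and 0 < det a < π² (so the geodesic t ↦ g(exp(ta)·,·) joining g and g(A·,·) is spacelike). -/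
open Matrix NormedSpace Real Nat


lemma sq_of_traceless (a : Matrix (Fin 2) (Fin 2) ℝ) (h : a.trace = 0) :
    a ^ 2 = (-a.det) • (1 : Matrix (Fin 2) (Fin 2) ℝ) := by
  rw [Matrix.trace_fin_two] at h
  have h' : a 1 1 = -(a 0 0) := by linarith
  rw [pow_two]
  ext i j
  fin_cases i <;> fin_cases j <;>
    simp [Matrix.mul_apply, Fin.sum_univ_two, Matrix.det_fin_two, Matrix.one_apply, h'] <;>
    ring

lemma exp_of_traceless (a : Matrix (Fin 2) (Fin 2) ℝ) (h : a.trace = 0) {c F S : ℝ}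
    (hc : c = -a.det)
    (hF : HasSum (fun k : ℕ => c ^ k / ((2 * k)! : ℝ)) F)
    (hS : HasSum (fun k : ℕ => c ^ k / ((2 * k + 1)! : ℝ)) S) :
    exp a = F • 1 + S • a := by
  have hsq : a ^ 2 = c • 1 := hc ▸ sq_of_traceless a h
  have heven : ∀ k : ℕ, a ^ (2 * k) = c ^ k • 1 := fun k => by
    rw [pow_mul, hsq, smul_pow, one_pow]
  have hodd : ∀ k : ℕ, a ^ (2 * k + 1) = c ^ k • a := fun k => by
    rw [pow_succ, heven, Matrix.smul_mul, Matrix.one_mul]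
  rw [exp_eq_tsum ℝ]
  refine HasSum.tsum_eq (HasSum.even_add_odd ?_ ?_)
  · convert hF.smul_const (1 : Matrix (Fin 2) (Fin 2) ℝ) using 2 with k
    case e'_3 => rfl
    rw [heven, smul_smul, div_eq_inv_mul]
  · convert hS.smul_const a using 2 with k
    case e'_3 => rfl
    rw [hodd, smul_smul, div_eq_inv_mul]

lemma det_comb (a : Matrix (Fin 2) (Fin 2) ℝ) (h : a.trace = 0) (F S : ℝ) :
    (F • 1 + S • a).det = F ^ 2 + S ^ 2 * a.det := by
  rw [Matrix.trace_fin_two] at h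
  have h' : a 1 1 = -(a 0 0) := by linarith
  simp [Matrix.det_fin_two, Matrix.one_apply, h']
  ring

lemma trace_comb (a : Matrix (Fin 2) (Fin 2) ℝ) (h : a.trace = 0) (F S : ℝ) :
    (F • 1 + S • a).trace = 2 * F := by
  simp [Matrix.trace_add, Matrix.trace_smul, h, Matrix.trace_one]
  ring

lemma exp_form (b : Matrix (Fin 2) (Fin 2) ℝ) (h : b.trace = 0) :
    ∃ F S : ℝ, exp b = F • 1 + S • b ∧ F ^ 2 + S ^ 2 * b.det = 1 ∧
      (b.det = 0 → F = 1) ∧ (b.det < 0 → 1 < F) ∧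
      (0 < b.det →
        F = Real.cos (Real.sqrt b.det) ∧ S = Real.sin (Real.sqrt b.det) / Real.sqrt b.det) := by
  rcases lt_trichotomy b.det 0 with hd | hd | hd
  · set μ := Real.sqrt (-b.det) with hμdef
    have hμ : 0 < μ := Real.sqrt_pos.2 (by linarith)
    have hμ2 : μ ^ 2 = -b.det := Real.sq_sqrt (by linarith)
    refine ⟨Real.cosh μ, Real.sinh μ / μ, ?_, ?_, ?_, ?_, ?_⟩
    · refine exp_of_traceless b h hμ2 ?_ ?_
      · convert Real.hasSum_cosh μ using 2 with k
        rw [← pow_mul]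
      · convert (Real.hasSum_sinh μ).div_const μ using 2 with k
        case e'_3 => rfl
        rw [← pow_mul, pow_succ]
        field_simp
        try ring
    · have h1 : Real.cosh μ ^ 2 - Real.sinh μ ^ 2 = 1 := Real.cosh_sq_sub_sinh_sq μ
      have hdet : b.det = -μ ^ 2 := by linarith
      rw [hdet, div_pow, mul_neg, div_mul_cancel₀ _ (pow_ne_zero 2 hμ.ne')]
      linarith
    · intro h0; linarith
    · intro _; exact Real.one_lt_cosh.2 hμ.ne'
    · intro h0; linarith
  · refine ⟨1, 1, ?_, by simp [hd], fun _ => rfl, fun h0 => absurd hd (by linarith), fun h0 => absurd hd (by linarith)⟩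
    refine exp_of_traceless b h (by rw [hd, neg_zero]) ?_ ?_
    · convert hasSum_single (f := fun k : ℕ => (0:ℝ) ^ k / ((2 * k)! : ℝ)) 0 ?_ using 1
      · norm_num
      · intro k hk
        simp [zero_pow hk]
    · convert hasSum_single (f := fun k : ℕ => (0:ℝ) ^ k / ((2 * k + 1)! : ℝ)) 0 ?_ using 1
      · norm_num
      · intro k hk
        simp [zero_pow hk]
  · set θ := Real.sqrt b.det with hθdef
    have hθ : 0 < θ := Real.sqrt_pos.2 hd
    have hθ2 : θ ^ 2 = b.det := Real.sq_sqrt hd.le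
    refine ⟨Real.cos θ, Real.sin θ / θ, ?_, ?_, ?_, ?_, fun _ => ⟨rfl, rfl⟩⟩
    · refine exp_of_traceless b h (c := -θ^2) (by rw [hθ2]) ?_ ?_
      · convert Real.hasSum_cos θ using 2 with k
        rw [neg_pow, ← pow_mul, mul_div_assoc]
      · convert (Real.hasSum_sin θ).div_const θ using 2 with k
        case e'_3 => rfl
        rw [neg_pow, ← pow_mul, pow_succ]
        field_simp
        try ring
    · have h1 : Real.sin θ ^ 2 + Real.cos θ ^ 2 = 1 := Real.sin_sq_add_cos_sq θ
      have hdet : b.det = θ ^ 2 := hθ2.symm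
      rw [hdet, div_pow, div_mul_cancel₀ _ (pow_ne_zero 2 hθ.ne')]
      linarith
    · intro h0; linarith
    · intro h0; linarith

lemma det_exp_two (b : Matrix (Fin 2) (Fin 2) ℝ) :
    (exp b).det = Real.exp b.trace := by
  set τ := b.trace with hτ
  set b₀ := b - (τ / 2) • 1 with hb₀
  have h₀ : b₀.trace = 0 := by
    simp [hb₀, hτ, Matrix.trace_sub, Matrix.trace_smul, Matrix.trace_one]
  have hb : b = (τ / 2) • (1 : Matrix (Fin 2) (Fin 2) ℝ) + b₀ := by
    rw [hb₀]; abel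
  have hcomm : Commute ((τ / 2) • (1 : Matrix (Fin 2) (Fin 2) ℝ)) b₀ :=
    (Commute.one_left b₀).smul_left _
  obtain ⟨F, S, hFS, h1, -, -, -⟩ := exp_form b₀ h₀
  have hsmul1 : ((τ / 2) • (1 : Matrix (Fin 2) (Fin 2) ℝ)) =
      Matrix.diagonal (fun _ => τ / 2) := by
    rw [Matrix.smul_one_eq_diagonal]
  have hpi : (NormedSpace.exp (fun _ : Fin 2 => τ / 2)) = fun _ : Fin 2 => rexp (τ / 2) := by
    ext i
    simp [Pi.exp_def, Real.exp_eq_exp_ℝ]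
  rw [hb, Matrix.exp_add_of_commute _ _ hcomm, Matrix.det_mul, hsmul1,
    Matrix.exp_diagonal, Matrix.det_diagonal, hFS, det_comb b₀ h₀, h1, hpi]
  rw [Fin.prod_univ_two, ← Real.exp_add, add_halves, mul_one]

lemma char_lemma (A : Matrix (Fin 2) (Fin 2) ℝ) (hAdet : A.det = 1)
    (htr₁ : -2 < A.trace) (htr₂ : A.trace < 2)
    (b : Matrix (Fin 2) (Fin 2) ℝ) (hexp : exp b = A) (hdetb : b.det < Real.pi ^ 2) :
    b.trace = 0 ∧ 0 < b.det ∧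
      b = (Real.arccos (A.trace / 2) / Real.sin (Real.arccos (A.trace / 2))) •
        (A - Real.cos (Real.arccos (A.trace / 2)) • 1) := by
  have htr0 : b.trace = 0 := by
    have h1 : Real.exp b.trace = 1 := by rw [← det_exp_two, hexp, hAdet]
    exact (Real.exp_eq_one_iff _).1 h1
  obtain ⟨F, S, hFS, h1, h0, hneg, hpos⟩ := exp_form b htr0
  have htrA : A.trace = 2 * F := by rw [← hexp, hFS, trace_comb b htr0]
  have hdpos : 0 < b.det := by
    rcases lt_trichotomy b.det 0 with hc | hc | hc
    · have := hneg hc; linarith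
    · rw [h0 hc] at htrA; linarith
    · exact hc
  refine ⟨htr0, hdpos, ?_⟩
  obtain ⟨hFc, hSc⟩ := hpos hdpos
  set ψ := Real.sqrt b.det with hψ
  have hψpos : 0 < ψ := Real.sqrt_pos.2 hdpos
  have hψlt : ψ < Real.pi := by
    have h2 : ψ < Real.sqrt (Real.pi ^ 2) := Real.sqrt_lt_sqrt hdpos.le hdetb
    rwa [Real.sqrt_sq Real.pi_pos.le] at h2
  set x := A.trace / 2 with hx
  set θ := Real.arccos x with hθ
  have hcosθ : Real.cos θ = x := Real.cos_arccos (by rw [hx]; linarith) (by rw [hx]; linarith)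
  have hψθ : ψ = θ := by
    apply Real.injOn_cos ⟨hψpos.le, hψlt.le⟩ ⟨Real.arccos_nonneg x, Real.arccos_le_pi x⟩
    rw [hcosθ, ← hFc]
    rw [hx]; linarith
  have hsinψ : 0 < Real.sin ψ := Real.sin_pos_of_pos_of_lt_pi hψpos hψlt
  have hAeq : A - Real.cos θ • (1 : Matrix (Fin 2) (Fin 2) ℝ) = S • b := by
    rw [← hexp, hFS, ← hψθ, ← hFc]
    abel
  rw [hAeq, smul_smul, hSc, ← hψθ]
  have hcoef : ψ / Real.sin ψ * (Real.sin ψ / ψ) = 1 := by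
    field_simp
  rw [hcoef, one_smul]

/-- For a Lorentzian inner product `g(u,v) = uᵀGv` on `ℝ²` and a `g`-symmetric
matrix `A` with `det A = 1` and `-2 < tr A < 2`, there is exactly one `g`-symmetric matrix `a`
with `exp a = A` and `det a < π²`; moreover it satisfies `tr a = 0` and `0 < det a < π²`
(spacelike geodesic). -/
theorem spacelike_geodesic_unique (G A : Matrix (Fin 2) (Fin 2) ℝ)
    (hGsymm : Gᵀ = G) (hGdet : G.det < 0)
    (hAsymm : Aᵀ * G = G * A) (hAdet : A.det = 1)
    (htr₁ : -2 < A.trace) (htr₂ : A.trace < 2) :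
    (∃! a : Matrix (Fin 2) (Fin 2) ℝ,
        aᵀ * G = G * a ∧ exp a = A ∧ a.det < Real.pi ^ 2) ∧
      ∀ a : Matrix (Fin 2) (Fin 2) ℝ, aᵀ * G = G * a → exp a = A →
        a.det < Real.pi ^ 2 → a.trace = 0 ∧ 0 < a.det := by
  set x := A.trace / 2 with hx
  set θ := Real.arccos x with hθdef
  have hx1 : -1 < x := by rw [hx]; linarith
  have hx2 : x < 1 := by rw [hx]; linarith
  have hcosθ : Real.cos θ = x := Real.cos_arccos (by linarith) (by linarith)
  have hθpos : 0 < θ := Real.arccos_pos.2 hx2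
  have hθlt : θ < Real.pi := by
    refine lt_of_le_of_ne (Real.arccos_le_pi x) fun h => ?_
    rw [h, Real.cos_pi] at hcosθ
    linarith
  have hsin : 0 < Real.sin θ := Real.sin_pos_of_pos_of_lt_pi hθpos hθlt
  set a := (θ / Real.sin θ) • (A - Real.cos θ • 1) with ha
  have htra : a.trace = 0 := by
    rw [ha, Matrix.trace_smul, Matrix.trace_sub, Matrix.trace_smul, Matrix.trace_one]
    rw [hcosθ, hx]
    simp [smul_eq_mul]
    try ring
  have hdetsub : (A - Real.cos θ • 1).det = Real.sin θ ^ 2 := by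
    have hsc : Real.sin θ ^ 2 + Real.cos θ ^ 2 = 1 := Real.sin_sq_add_cos_sq θ
    have htr : A 0 0 + A 1 1 = 2 * Real.cos θ := by
      have h2 : A.trace = A 0 0 + A 1 1 := Matrix.trace_fin_two A
      rw [hcosθ, hx]
      linarith
    have hdA : A 0 0 * A 1 1 - A 0 1 * A 1 0 = 1 := by
      have h2 := Matrix.det_fin_two A
      rw [hAdet] at h2
      linarith
    simp [Matrix.det_fin_two, Matrix.sub_apply, Matrix.smul_apply, Matrix.one_apply]
    linear_combination hdA - Real.cos θ * htr - hsc
  have hdeta : a.det = θ ^ 2 := by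
    rw [ha, Matrix.det_smul, hdetsub]
    simp [Fintype.card_fin]
    field_simp
  obtain ⟨F, S, hFS, -, -, -, hpos⟩ := exp_form a htra
  have hsq : Real.sqrt a.det = θ := by rw [hdeta, Real.sqrt_sq hθpos.le]
  obtain ⟨hFc, hSc⟩ := hpos (by rw [hdeta]; positivity)
  have hexpa : exp a = A := by
    rw [hFS, hFc, hSc, hsq]
    rw [ha, smul_smul]
    have hco : Real.sin θ / θ * (θ / Real.sin θ) = 1 := by field_simp
    rw [hco, one_smul]
    abel
  have hasymm : aᵀ * G = G * a := by
    rw [ha, Matrix.transpose_smul, Matrix.transpose_sub, Matrix.transpose_smul,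
      Matrix.transpose_one, Matrix.smul_mul, Matrix.mul_smul, Matrix.sub_mul, Matrix.mul_sub,
      hAsymm, Matrix.smul_mul, Matrix.mul_smul, Matrix.one_mul, Matrix.mul_one]
  have hdlt : a.det < Real.pi ^ 2 := by
    rw [hdeta]
    nlinarith
  constructor
  · refine ⟨a, ⟨hasymm, hexpa, hdlt⟩, ?_⟩
    rintro b ⟨-, hbexp, hbdet⟩
    have h3 := (char_lemma A hAdet htr₁ htr₂ b hbexp hbdet).2.2
    rw [ha, hθdef, hx]
    exact h3
  · intro b _ hbexp hbdet
    obtain ⟨h1, h2, -⟩ := char_lemma A hAdet htr₁ htr₂ b hbexp hbdet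
    exact ⟨h1, h2⟩
end

section
/- Let G be a real symmetric 2×2 matrix with det G < 0, so that g(u,v) = uᵀGv is a Lorentzian inner product on ℝ², and let A be a real 2×2 matrix with AᵀG = GA and det A = 1. If tr A < −2, then there is no real 2×2 matrix a with aᵀG = Ga and exp(a) = A (no geodesic joins g and g(A·,·) in the space of Lorentzian inner products with fixed volume form). -/
open Matrix NormedSpace

lemma trace_sq_fin_two (B : Matrix (Fin 2) (Fin 2) ℝ) :
    (B * B).trace = B.trace ^ 2 - 2 * B.det := by
  simp [Matrix.trace_fin_two, Matrix.det_fin_two, Matrix.mul_apply, Fin.sum_univ_two]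
  ring

lemma exp_half_sq (a : Matrix (Fin 2) (Fin 2) ℝ) (c : ℝ) :
    exp (c • a) * exp (c • a) = exp ((2 * c) • a) := by
  rw [← Matrix.exp_add_of_commute _ _ (Commute.refl _), ← add_smul]
  ring_nf

/-- For a Lorentzian inner product `g(u,v) = uᵀGv` on `ℝ²` and a `g`-symmetric
matrix `A` with `det A = 1` and `tr A < -2`, there is no `g`-symmetric matrix `a` with
`exp a = A` (no geodesic joins `g` and `g(A·,·)`). -/
theorem no_geodesic_of_trace_lt_neg_two (G A : Matrix (Fin 2) (Fin 2) ℝ)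
    (hGsymm : Gᵀ = G) (hGdet : G.det < 0)
    (hAsymm : Aᵀ * G = G * A) (hAdet : A.det = 1)
    (htr : A.trace < -2) :
    ¬ ∃ a : Matrix (Fin 2) (Fin 2) ℝ, aᵀ * G = G * a ∧ exp a = A := by
  rintro ⟨a, -, hexp⟩
  set B : Matrix (Fin 2) (Fin 2) ℝ := exp ((1 / 2 : ℝ) • a) with hB
  set C : Matrix (Fin 2) (Fin 2) ℝ := exp ((1 / 4 : ℝ) • a) with hC
  have hBB : B * B = A := by
    rw [hB, exp_half_sq]
    norm_num
    exact hexp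
  have hCC : C * C = B := by
    rw [hC, exp_half_sq, hB]
    norm_num
  -- det B ≥ 0
  have hdetB_nonneg : 0 ≤ B.det := by
    rw [← hCC, Matrix.det_mul]
    exact mul_self_nonneg _
  -- B is invertible: B * exp(-(1/2)•a) = 1
  have hunit : B * exp (-((1 / 2 : ℝ) • a)) = 1 := by
    rw [hB, ← Matrix.exp_add_of_commute _ _ (Commute.neg_right (Commute.refl ((1 / 2 : ℝ) • a))),
      add_neg_cancel, exp_zero]
  have hdetB_ne : B.det ≠ 0 := by
    intro h
    have := congrArg Matrix.det hunit
    rw [Matrix.det_mul, h, zero_mul, Matrix.det_one] at this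
    norm_num at this
  have hdetB_pos : 0 < B.det := lt_of_le_of_ne hdetB_nonneg (Ne.symm hdetB_ne)
  have hdet_sq : B.det * B.det = 1 := by
    rw [← Matrix.det_mul, hBB, hAdet]
  have hdetB_one : B.det = 1 := by nlinarith
  have htrA : A.trace = B.trace ^ 2 - 2 := by
    rw [← hBB, trace_sq_fin_two, hdetB_one]; ring
  nlinarith [sq_nonneg B.trace]
end

section
/- Let G be a real symmetric 2×2 matrix with det G < 0, so that g(u,v) = uᵀGv is a Lorentzian inner product on ℝ². Then: (a) for every real 2×2 matrix a with aᵀG = Ga, tr a = 0 and det a > 0 there exists t > 0 with exp(ta) = −1 (minus the identity matrix), so every spacelike geodesic emanating from g passes through −g; and (b) for every real 2×2 matrix a with aᵀG = Ga, tr a = 0 and det a ≤ 0, one has exp(ta) ≠ −1 for all real t, so every timelike or null geodesic emanating from g misses −g. -/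
open Matrix NormedSpace

/-- Cayley–Hamilton for trace-free 2×2 matrices: `a² = -(det a) • 1`. -/
private lemma trace_free_sq (a : Matrix (Fin 2) (Fin 2) ℝ) (h : a.trace = 0) :
    a * a = (-a.det) • (1 : Matrix (Fin 2) (Fin 2) ℝ) := by
  have htr : a 0 0 + a 1 1 = 0 := by
    have := Matrix.trace_fin_two a
    rw [h] at this; linarith [this.symm]
  have h11 : a 1 1 = -a 0 0 := by linarith
  ext i j
  fin_cases i <;> fin_cases j <;>
    simp [Matrix.mul_apply, Fin.sum_univ_two, Matrix.det_fin_two, Matrix.one_apply, h11] <;>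
    ring

/-- If `v` is an eigenvector of `M` with eigenvalue `c`, then it is an eigenvector of
`exp M` with eigenvalue `Real.exp c`. -/
private lemma exp_mulVec_eigen (M : Matrix (Fin 2) (Fin 2) ℝ) (v : Fin 2 → ℝ) (c : ℝ)
    (h : M *ᵥ v = c • v) : exp M *ᵥ v = Real.exp c • v := by
  letI : SeminormedRing (Matrix (Fin 2) (Fin 2) ℝ) := Matrix.linftyOpSemiNormedRing
  letI : NormedRing (Matrix (Fin 2) (Fin 2) ℝ) := Matrix.linftyOpNormedRing
  letI : NormedAlgebra ℝ (Matrix (Fin 2) (Fin 2) ℝ) := Matrix.linftyOpNormedAlgebra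
  have hpow : ∀ n : ℕ, (M ^ n) *ᵥ v = (c ^ n) • v := by
    intro n
    induction n with
    | zero => simp
    | succ n ih =>
      rw [pow_succ, ← Matrix.mulVec_mulVec, h, Matrix.mulVec_smul, ih, smul_smul, pow_succ]
      ring_nf
  let L : Matrix (Fin 2) (Fin 2) ℝ →ₗ[ℝ] (Fin 2 → ℝ) :=
    { toFun := fun A => A *ᵥ v
      map_add' := fun A B => Matrix.add_mulVec A B v
      map_smul' := fun r A => Matrix.smul_mulVec r A v }
  have hLc : Continuous L := L.continuous_of_finiteDimensional
  let L' : Matrix (Fin 2) (Fin 2) ℝ →L[ℝ] (Fin 2 → ℝ) := ⟨L, hLc⟩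
  have hsum : Summable fun n : ℕ => (((n : ℕ).factorial : ℝ))⁻¹ • M ^ n := expSeries_summable' M
  have hmap : exp M *ᵥ v = ∑' n : ℕ, (((n : ℕ).factorial : ℝ))⁻¹ • ((M ^ n) *ᵥ v) := by
    have h1 : exp M = ∑' n : ℕ, (((n : ℕ).factorial : ℝ))⁻¹ • M ^ n := by
      rw [exp_eq_tsum (𝕂 := ℝ)]
    rw [h1]
    show L' (∑' n : ℕ, (((n : ℕ).factorial : ℝ))⁻¹ • M ^ n) = _
    rw [L'.map_tsum hsum]
    refine tsum_congr fun n => ?_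
    show ((((n : ℕ).factorial : ℝ))⁻¹ • M ^ n) *ᵥ v = _
    rw [Matrix.smul_mulVec]
  rw [hmap]
  have hsum2 : Summable fun n : ℕ => (((n : ℕ).factorial : ℝ))⁻¹ * c ^ n := by
    simpa [smul_eq_mul] using (expSeries_summable' (𝕂 := ℝ) c)
  calc (∑' n : ℕ, (((n : ℕ).factorial : ℝ))⁻¹ • ((M ^ n) *ᵥ v))
      = ∑' n : ℕ, ((((n : ℕ).factorial : ℝ))⁻¹ * c ^ n) • v := by
        refine tsum_congr fun n => ?_
        rw [hpow n, smul_smul]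
    _ = (∑' n : ℕ, (((n : ℕ).factorial : ℝ))⁻¹ * c ^ n) • v := hsum2.tsum_smul_const v
    _ = Real.exp c • v := by
        congr 1
        rw [Real.exp_eq_exp_ℝ, exp_eq_tsum (𝕂 := ℝ)]
        simp [smul_eq_mul]

/-- A nonzero matrix moves some vector; use a standard basis vector. -/
private lemma exists_mulVec_ne_zero {b : Matrix (Fin 2) (Fin 2) ℝ} (hb : b ≠ 0) :
    ∃ u : Fin 2 → ℝ, b *ᵥ u ≠ 0 := by
  obtain ⟨i, j, hij⟩ : ∃ i j, b i j ≠ 0 := by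
    by_contra hc
    push_neg at hc
    exact hb (by ext i j; simp [hc])
  refine ⟨Pi.single j 1, fun h0 => hij ?_⟩
  have := congr_fun h0 i
  simpa [Matrix.mulVec_single] using this

/-- For a Lorentzian inner product `g(u,v) = uᵀGv` on `ℝ²`:
(a) every `g`-symmetric trace-free `a` with `det a > 0` (spacelike direction) satisfies
`exp (t • a) = -1` for some `t > 0`, so every spacelike geodesic from `g` passes through `-g`;
(b) every `g`-symmetric trace-free `a` with `det a ≤ 0` (timelike or null direction) satisfies
`exp (t • a) ≠ -1` for all real `t`, so timelike and null geodesics from `g` miss `-g`. -/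
theorem spacelike_hits_neg_timelike_null_miss (G : Matrix (Fin 2) (Fin 2) ℝ)
    (hGsymm : Gᵀ = G) (hGdet : G.det < 0) :
    (∀ a : Matrix (Fin 2) (Fin 2) ℝ, aᵀ * G = G * a → a.trace = 0 → 0 < a.det →
        ∃ t : ℝ, 0 < t ∧ exp (t • a) = -1) ∧
      (∀ a : Matrix (Fin 2) (Fin 2) ℝ, aᵀ * G = G * a → a.trace = 0 → a.det ≤ 0 →
        ∀ t : ℝ, exp (t • a) ≠ -1) := by
  constructor
  · -- (a) spacelike: use the embedding of ℂ generated by `a/√(det a)`.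
    intro a _ htr hdet
    letI : SeminormedRing (Matrix (Fin 2) (Fin 2) ℝ) := Matrix.linftyOpSemiNormedRing
    letI : NormedRing (Matrix (Fin 2) (Fin 2) ℝ) := Matrix.linftyOpNormedRing
    letI : NormedAlgebra ℝ (Matrix (Fin 2) (Fin 2) ℝ) := Matrix.linftyOpNormedAlgebra
    have hCH := trace_free_sq a htr
    set ω := Real.sqrt a.det with hωdef
    have hω0 : 0 < ω := Real.sqrt_pos.mpr hdet
    have hω2 : ω * ω = a.det := Real.mul_self_sqrt hdet.le
    have hI : (ω⁻¹ • a) * (ω⁻¹ • a) = -1 := by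
      rw [smul_mul_assoc, mul_smul_comm, hCH, smul_smul, smul_smul]
      have hc : ω⁻¹ * ω⁻¹ * -a.det = -1 := by
        field_simp
        nlinarith
      rw [hc, neg_smul, one_smul]
    set φ := Complex.liftAux (ω⁻¹ • a) hI with hφdef
    have hφc : Continuous φ := φ.toLinearMap.continuous_of_finiteDimensional
    refine ⟨Real.pi / ω, div_pos Real.pi_pos hω0, ?_⟩
    have h1 : (Real.pi / ω) • a = φ ((Real.pi : ℂ) * Complex.I) := by
      rw [hφdef, Complex.liftAux_apply]
      simp [Complex.mul_re, Complex.mul_im, smul_smul, div_eq_mul_inv]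
    have h2 : exp ((Real.pi : ℂ) * Complex.I) = -1 := by
      rw [← Complex.exp_eq_exp_ℂ]
      exact Complex.exp_pi_mul_I
    rw [h1]
    erw [← map_exp φ hφc]
    rw [h2, map_neg, _root_.map_one]
  · -- (b) timelike or null: `a` has a real eigenvector with nonnegative eigenvalue.
    intro a _ htr hdet t hexp
    have hCH := trace_free_sq a htr
    rcases eq_or_lt_of_le hdet with hdet0 | hdetneg
    · -- det a = 0 : a² = 0
      by_cases ha : a = 0
      · rw [ha, smul_zero, exp_zero] at hexp
        have h00 := congr_fun (congr_fun hexp 0) 0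
        norm_num [Matrix.one_apply, Matrix.neg_apply] at h00
      · obtain ⟨u, hu⟩ := exists_mulVec_ne_zero ha
        set v := a *ᵥ u with hvdef
        have haa : a * a = 0 := by rw [hCH, hdet0]; simp
        have hav : (t • a) *ᵥ v = (0 : ℝ) • v := by
          rw [hvdef, Matrix.smul_mulVec, Matrix.mulVec_mulVec, haa]
          simp
        have := exp_mulVec_eigen (t • a) v 0 hav
        rw [hexp, Real.exp_zero, one_smul] at this
        have hneg : (-1 : Matrix (Fin 2) (Fin 2) ℝ) *ᵥ v = -v := by
          rw [Matrix.neg_mulVec, Matrix.one_mulVec]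
        rw [hneg] at this
        apply hu
        funext i
        have hi := congr_fun this i
        simp only [Pi.neg_apply] at hi
        show v i = 0
        linarith
    · -- det a < 0 : a has a real eigenvalue ω = √(-det a) > 0
      set ω := Real.sqrt (-a.det) with hωdef
      have hω0 : 0 < ω := Real.sqrt_pos.mpr (by linarith)
      have hω2 : ω * ω = -a.det := Real.mul_self_sqrt (by linarith)
      set b := a + ω • (1 : Matrix (Fin 2) (Fin 2) ℝ) with hbdef
      have hb : b ≠ 0 := by
        intro h0
        have htrb : b.trace = 2 * ω := by
          rw [hbdef, Matrix.trace_add, htr, Matrix.trace_smul, Matrix.trace_one]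
          simp [Fintype.card_fin]
          ring
        rw [h0, Matrix.trace_zero] at htrb
        nlinarith
      obtain ⟨u, hu⟩ := exists_mulVec_ne_zero hb
      set v := b *ᵥ u with hvdef
      have hab : a * b = ω • b := by
        rw [hbdef, mul_add, hCH, mul_smul_comm, mul_one, smul_add, smul_smul]
        have : -a.det = ω * ω := hω2.symm
        rw [this]
        abel
      have hav : (t • a) *ᵥ v = (t * ω) • v := by
        rw [hvdef, Matrix.smul_mulVec, Matrix.mulVec_mulVec, hab,
          Matrix.smul_mulVec, smul_smul]
      have heig := exp_mulVec_eigen (t • a) v (t * ω) hav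
      rw [hexp] at heig
      have hneg : (-1 : Matrix (Fin 2) (Fin 2) ℝ) *ᵥ v = -v := by
        rw [Matrix.neg_mulVec, Matrix.one_mulVec]
      rw [hneg] at heig
      -- -v = exp(tω) • v, so (exp(tω)+1) • v = 0, contradiction
      have hv0 : v = 0 := by
        have h3 : (Real.exp (t * ω) + 1) • v = 0 := by
          rw [add_smul, one_smul, ← heig]
          abel
        have hpos : Real.exp (t * ω) + 1 ≠ 0 := by positivity
        exact (smul_eq_zero.mp h3).resolve_left hpos
      exact hu (hvdef ▸ hv0)
end

section
/- Let λ_1, …, λ_m be pairwise distinct nonzero real numbers and c_1, …, c_m positive real numbers. Let M be the m×m real matrix with entries M_{jk} = λ_j δ_{jk} − 2 λ_k c_k. Then the characteristic polynomial of M equals P(t) = ∏_{j=1}^m (t − λ_j) + 2 ∑_{j=1}^m λ_j c_j ∏_{k≠j} (t − λ_k), i.e. det(t·1 − M) = P(t) for all t; moreover P(λ_j) ≠ 0 for every j, so no λ_j is an eigenvalue of M. -/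
open Matrix Finset

/-- Determinant of a diagonal matrix plus a rank-one matrix with constant rows. -/
lemma det_diag_add_row {m : ℕ} (a v : Fin m → ℝ) :
    (Matrix.diagonal a + Matrix.of (fun _ k => v k)).det
      = (∏ j, a j) + ∑ j, v j * ∏ k ∈ Finset.univ.erase j, a k := by
  classical
  set f := (Matrix.detRowAlternating : ((Fin m) → ℝ) [⋀^(Fin m)]→ₗ[ℝ] ℝ) with hf
  set V : Fin m → Fin m → ℝ := fun _ => v with hV
  set D : Fin m → Fin m → ℝ := Matrix.diagonal a with hD
  have hdet : (Matrix.diagonal a + Matrix.of (fun _ k => v k)).det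
      = f (V + D) := by
    congr 1
    ext j k
    show Matrix.diagonal a j k + v k = V j k + D j k
    simp [hV, hD, add_comm]
  rw [hdet]
  rw [show (f (V + D) : ℝ) = ∑ s : Finset (Fin m), f (s.piecewise V D) from
    f.toMultilinearMap.map_add_univ V D]
  set g : Finset (Fin m) → ℝ :=
    fun s => f (s.piecewise V D) with hg
  have hzero : ∀ s : Finset (Fin m), 1 < s.card → g s = 0 := by
    intro s hs
    obtain ⟨i, hi, j, hj, hij⟩ := Finset.one_lt_card.mp hs
    refine f.map_eq_zero_of_eq _ ?_ hij
    rw [Finset.piecewise_eq_of_mem _ _ _ hi, Finset.piecewise_eq_of_mem _ _ _ hj]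
  have hempty : g ∅ = ∏ j, a j := by
    have h0 : (∅ : Finset (Fin m)).piecewise V D = D := Finset.piecewise_empty _ _
    rw [hg]
    show f ((∅ : Finset (Fin m)).piecewise V D) = _
    rw [h0]
    exact Matrix.det_diagonal
  have hsingle : ∀ j : Fin m, g {j} = v j * ∏ k ∈ Finset.univ.erase j, a k := by
    intro j
    have hp : ({j} : Finset (Fin m)).piecewise V D
        = Matrix.updateRow (Matrix.diagonal a) j v := by
      rw [Finset.piecewise_singleton]; rfl
    have hv : v = (fun k => if k = j then 0 else v k) + Pi.single j (v j) := by
      ext k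
      by_cases h : k = j <;> simp [h]
    rw [hg]
    show Matrix.det (({j} : Finset (Fin m)).piecewise V D) = _
    rw [hp, hv, Matrix.det_updateRow_add]
    have h1 : (Matrix.updateRow (Matrix.diagonal a) j
        fun k => if k = j then 0 else v k).det = 0 := by
      apply Matrix.det_eq_zero_of_column_eq_zero j
      intro i
      by_cases h : i = j
      · subst h; simp [Matrix.updateRow_apply]
      · simp [Matrix.updateRow_apply, h, Matrix.diagonal_apply_ne _ h]
    have h2 : Matrix.updateRow (Matrix.diagonal a) j (Pi.single j (v j))
        = Matrix.diagonal (Function.update a j (v j)) := by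
      ext i k
      simp only [Matrix.updateRow_apply, Matrix.diagonal_apply, Function.update_apply,
        Pi.single_apply]
      split_ifs <;> try rfl
      all_goals (exfalso; apply ‹¬_›; subst_vars; rfl)
    rw [h1, h2, Matrix.det_diagonal, zero_add,
      Finset.prod_update_of_mem (Finset.mem_univ j)]
    simp [Finset.sdiff_singleton_eq_erase]
  have hfilter : Finset.univ.filter (fun s : Finset (Fin m) => s.card ≤ 1)
      = insert ∅ (Finset.univ.image fun j => ({j} : Finset (Fin m))) := by
    ext s
    simp only [Finset.mem_filter, Finset.mem_univ, true_and, Finset.mem_insert,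
      Finset.mem_image]
    constructor
    · intro h
      rcases Nat.le_one_iff_eq_zero_or_eq_one.mp h with h0 | h1
      · exact Or.inl (Finset.card_eq_zero.mp h0)
      · obtain ⟨x, hx⟩ := Finset.card_eq_one.mp h1
        exact Or.inr ⟨x, hx.symm⟩
    · rintro (rfl | ⟨x, rfl⟩) <;> simp
  have hsplit := Finset.sum_filter_add_sum_filter_not Finset.univ
    (fun s : Finset (Fin m) => s.card ≤ 1) g
  have hnot : ∑ s ∈ Finset.univ.filter (fun s : Finset (Fin m) => ¬ s.card ≤ 1), g s = 0 :=
    Finset.sum_eq_zero fun s hs =>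
      hzero s (by simpa using (Finset.mem_filter.mp hs).2)
  calc ∑ s : Finset (Fin m), g s
      = ∑ s ∈ Finset.univ.filter (fun s : Finset (Fin m) => s.card ≤ 1), g s
        + ∑ s ∈ Finset.univ.filter (fun s : Finset (Fin m) => ¬ s.card ≤ 1), g s :=
        hsplit.symm
    _ = ∑ s ∈ insert ∅ (Finset.univ.image fun j => ({j} : Finset (Fin m))), g s := by
        rw [hnot, add_zero, hfilter]
    _ = g ∅ + ∑ s ∈ Finset.univ.image (fun j => ({j} : Finset (Fin m))), g s := by
        rw [Finset.sum_insert (by simp)]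
    _ = g ∅ + ∑ j, g {j} := by
        rw [Finset.sum_image (fun i _ j _ h => Finset.singleton_injective h)]
    _ = (∏ j, a j) + ∑ j, v j * ∏ k ∈ Finset.univ.erase j, a k := by
        rw [hempty]
        congr 1
        exact Finset.sum_congr rfl fun j _ => hsingle j

/-- For pairwise distinct nonzero reals `λ_j` and positive reals `c_j`, the
matrix `M` with entries `M_{jk} = λ_j δ_{jk} - 2 λ_k c_k` has characteristic polynomial
`P(t) = ∏_j (t - λ_j) + 2 ∑_j λ_j c_j ∏_{k≠j} (t - λ_k)`, and `P(λ_j) ≠ 0` for every `j`,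
so no `λ_j` is an eigenvalue of `M`. -/
theorem char_poly_of_spectral_matrix {m : ℕ} (l : Fin m → ℝ)
    (hinj : Function.Injective l) (hne : ∀ j, l j ≠ 0)
    (c : Fin m → ℝ) (hc : ∀ j, 0 < c j) :
    let M : Matrix (Fin m) (Fin m) ℝ :=
      Matrix.of fun j k => (if j = k then l j else 0) - 2 * l k * c k
    let P : ℝ → ℝ := fun t =>
      (∏ j, (t - l j)) + 2 * ∑ j, l j * c j * ∏ k ∈ Finset.univ.erase j, (t - l k)
    (∀ t : ℝ, (t • (1 : Matrix (Fin m) (Fin m) ℝ) - M).det = P t) ∧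
      ∀ j, P (l j) ≠ 0 := by
  intro M P
  constructor
  · intro t
    have hM : t • (1 : Matrix (Fin m) (Fin m) ℝ) - M
        = Matrix.diagonal (fun j => t - l j)
          + Matrix.of (fun _ k => 2 * l k * c k) := by
      ext j k
      by_cases h : j = k <;>
        simp [M, Matrix.one_apply, Matrix.diagonal_apply, h, sub_eq_add_neg] <;> ring
    rw [hM, det_diag_add_row]
    show _ = (∏ j, (t - l j)) + 2 * ∑ j, l j * c j * ∏ k ∈ Finset.univ.erase j, (t - l k)
    rw [Finset.mul_sum]
    congr 1
    exact Finset.sum_congr rfl fun j _ => by ring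
  · intro j hPj
    have h1 : (∏ k, (l j - l k)) = 0 :=
      Finset.prod_eq_zero (Finset.mem_univ j) (by simp)
    have h2 : ∑ i, l i * c i * ∏ k ∈ Finset.univ.erase i, (l j - l k)
        = l j * c j * ∏ k ∈ Finset.univ.erase j, (l j - l k) := by
      refine Finset.sum_eq_single j ?_ (by simp)
      intro i _ hij
      have : (∏ k ∈ Finset.univ.erase i, (l j - l k)) = 0 :=
        Finset.prod_eq_zero (Finset.mem_erase.mpr ⟨fun h => hij h.symm, Finset.mem_univ j⟩)
          (by simp)
      rw [this, mul_zero]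
    have hprod : (∏ k ∈ Finset.univ.erase j, (l j - l k)) ≠ 0 := by
      refine Finset.prod_ne_zero_iff.mpr fun k hk => ?_
      have hkj : k ≠ j := (Finset.mem_erase.mp hk).1
      exact sub_ne_zero.mpr fun h => hkj (hinj h.symm)
    have : P (l j) = 2 * (l j * c j * ∏ k ∈ Finset.univ.erase j, (l j - l k)) := by
      show (∏ k, (l j - l k)) + 2 * ∑ i, l i * c i * ∏ k ∈ Finset.univ.erase i, (l j - l k) = _
      rw [h1, h2, zero_add]
    rw [this] at hPj
    have := mul_ne_zero (mul_ne_zero (hne j) (ne_of_gt (hc j))) hprod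
    have : l j * c j * ∏ k ∈ Finset.univ.erase j, (l j - l k) ≠ 0 := by
      exact mul_ne_zero (mul_ne_zero (hne j) (ne_of_gt (hc j))) hprod
    exact (mul_ne_zero two_ne_zero this) hPj
end

section
/- Let λ_1, …, λ_m be pairwise distinct nonzero real numbers, c_1, …, c_m positive real numbers, M the m×m real matrix with entries M_{jk} = λ_j δ_{jk} − 2 λ_k c_k, and P(t) = ∏_{j=1}^m (t − λ_j) + 2 ∑_{j=1}^m λ_j c_j ∏_{k≠j} (t − λ_k). If μ is a real root of P, then μ ≠ λ_j for all j, the vector v_μ ∈ ℝ^m with components (v_μ)_j = 1/(μ − λ_j) satisfies M v_μ = μ v_μ, and the eigenspace of M for the eigenvalue μ is one-dimensional, spanned by v_μ. -/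
open Matrix Finset

/-- For pairwise distinct nonzero reals `λ_j`, positive reals `c_j`, the matrix
`M` with `M_{jk} = λ_j δ_{jk} - 2 λ_k c_k` and the polynomial
`P(t) = ∏_j (t - λ_j) + 2 ∑_j λ_j c_j ∏_{k≠j} (t - λ_k)`: if `μ` is a real root of `P`, then
`μ ≠ λ_j` for all `j`, the vector `v_μ` with components `1/(μ - λ_j)` is an eigenvector of `M`
for the eigenvalue `μ`, and the corresponding eigenspace is one-dimensional, spanned by `v_μ`. -/
theorem eigenvector_of_root {m : ℕ} (l : Fin m → ℝ)
    (hinj : Function.Injective l) (hne : ∀ j, l j ≠ 0)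
    (c : Fin m → ℝ) (hc : ∀ j, 0 < c j) (μ : ℝ) :
    let M : Matrix (Fin m) (Fin m) ℝ :=
      Matrix.of fun j k => (if j = k then l j else 0) - 2 * l k * c k
    let v : Fin m → ℝ := fun j => (μ - l j)⁻¹
    ((∏ j, (μ - l j)) + 2 * ∑ j, l j * c j * ∏ k ∈ Finset.univ.erase j, (μ - l k)) = 0 →
    (∀ j, μ ≠ l j) ∧
      M.mulVec v = μ • v ∧
      v ≠ 0 ∧
      ∀ w : Fin m → ℝ, M.mulVec w = μ • w → ∃ s : ℝ, w = s • v := by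
  intro M v hP
  -- μ ≠ l j
  have hmu : ∀ j, μ ≠ l j := by
    intro j0 hmu0
    have hprod : (∏ j, (μ - l j)) = 0 :=
      Finset.prod_eq_zero (Finset.mem_univ j0) (by rw [hmu0, sub_self])
    have hsum : (∑ j, l j * c j * ∏ k ∈ Finset.univ.erase j, (μ - l k))
        = l j0 * c j0 * ∏ k ∈ Finset.univ.erase j0, (μ - l k) := by
      rw [← Finset.sum_erase_add _ _ (Finset.mem_univ j0)]
      have hz : ∀ j ∈ Finset.univ.erase j0,
          l j * c j * ∏ k ∈ Finset.univ.erase j, (μ - l k) = 0 := by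
        intro j hj
        have hj' : j ≠ j0 := Finset.ne_of_mem_erase hj
        have : (∏ k ∈ Finset.univ.erase j, (μ - l k)) = 0 :=
          Finset.prod_eq_zero (Finset.mem_erase.mpr ⟨hj'.symm, Finset.mem_univ j0⟩)
            (by rw [hmu0, sub_self])
        rw [this, mul_zero]
      rw [Finset.sum_eq_zero hz, zero_add]
    have hne0 : (∏ k ∈ Finset.univ.erase j0, (μ - l k)) ≠ 0 := by
      refine Finset.prod_ne_zero_iff.mpr fun k hk => ?_
      have hk' : k ≠ j0 := Finset.ne_of_mem_erase hk
      rw [hmu0]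
      exact sub_ne_zero.mpr fun h => hk' (hinj h.symm)
    rw [hprod, hsum, zero_add] at hP
    exact (mul_ne_zero (by norm_num : (2:ℝ) ≠ 0)
      (mul_ne_zero (mul_ne_zero (hne j0) (hc j0).ne') hne0)) hP
  have hv : ∀ j, μ - l j ≠ 0 := fun j => sub_ne_zero.mpr (hmu j)
  have hPr : (∏ j, (μ - l j)) ≠ 0 := Finset.prod_ne_zero_iff.mpr fun j _ => hv j
  -- key sum identity
  have herase : ∀ j : Fin m, l j * c j * ∏ k ∈ Finset.univ.erase j, (μ - l k)
      = (∏ k, (μ - l k)) * (l j * c j * (μ - l j)⁻¹) := by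
    intro j
    have : (∏ k, (μ - l k)) * (l j * c j * (μ - l j)⁻¹)
        = (l j * c j) * ((μ - l j)⁻¹ * ∏ k, (μ - l k)) := by ring
    rw [this, ← Finset.mul_prod_erase Finset.univ _ (Finset.mem_univ j),
      inv_mul_cancel_left₀ (hv j)]
  rw [Finset.sum_congr rfl fun j _ => herase j, ← Finset.mul_sum] at hP
  set S : ℝ := ∑ j, l j * c j * (μ - l j)⁻¹ with hS
  have hSval : 1 + 2 * S = 0 := by
    have h0 : (∏ j, (μ - l j)) * (1 + 2 * S) = 0 := by rw [mul_add, mul_one]; linarith [hP]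
    rcases mul_eq_zero.mp h0 with h | h
    · exact absurd h hPr
    · exact h
  -- eigenvector equation
  have hrow : ∀ (w : Fin m → ℝ) (j : Fin m),
      M.mulVec w j = l j * w j - 2 * ∑ k, l k * c k * w k := by
    intro w j
    simp only [M, Matrix.mulVec, dotProduct, Matrix.of_apply, sub_mul]
    rw [Finset.sum_sub_distrib]
    congr 1
    · simp only [ite_mul, zero_mul]
      rw [Finset.sum_ite_eq Finset.univ j (fun k => l j * w k)]
      simp
    · rw [Finset.mul_sum]
      exact Finset.sum_congr rfl fun k _ => by ring
  have heig : M.mulVec v = μ • v := by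
    funext j
    rw [hrow v j]
    have : (∑ k, l k * c k * v k) = S := rfl
    rw [this]
    simp only [Pi.smul_apply, smul_eq_mul, v]
    have hx : (μ - l j) * (μ - l j)⁻¹ = 1 := mul_inv_cancel₀ (hv j)
    linear_combination (-1 : ℝ) * hx - hSval
  refine ⟨hmu, heig, ?_, ?_⟩
  · -- v ≠ 0
    rcases Nat.eq_zero_or_pos m with hm | hm
    · subst hm
      exfalso
      rw [hS] at hSval
      simp at hSval
    · intro h0
      have := congrFun h0 ⟨0, hm⟩
      exact hv _ (inv_eq_zero.mp this)
  · intro w hw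
    set T : ℝ := 2 * ∑ k, l k * c k * w k with hT
    refine ⟨-T, ?_⟩
    funext j
    have hj := congrFun hw j
    rw [hrow w j] at hj
    simp only [Pi.smul_apply, smul_eq_mul] at hj ⊢
    have : (μ - l j) * w j = -T := by rw [hT]; linarith
    have hwj : w j = -T / (μ - l j) := by
      rw [eq_div_iff (hv j)]; linarith
    simpa [v, div_eq_mul_inv] using hwj
end

section
/- Let λ_1, …, λ_m be pairwise distinct nonzero real numbers, c_1, …, c_m positive real numbers, P(t) = ∏_{j=1}^m (t − λ_j) + 2 ∑_{j=1}^m λ_j c_j ∏_{k≠j} (t − λ_k) and Q(t) = ∏_{j=1}^m (t − λ_j). If μ is a real root of P, then ∑_{j=1}^m λ_j c_j/(μ − λ_j)² = −P′(μ)/(2 Q(μ)). In particular, ∑_{j=1}^m λ_j c_j/(μ − λ_j)² = 0 (i.e. the eigenvector v_μ with components 1/(μ − λ_j) is a null vector for the form ⟨y,z⟩ = ∑_j λ_j c_j y_j z_j) if and only if μ is a multiple root of P. -/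
open Matrix Finset

/-- For pairwise distinct nonzero reals `λ_j`, positive reals `c_j`,
`P(t) = ∏_j (t - λ_j) + 2 ∑_j λ_j c_j ∏_{k≠j} (t - λ_k)` and `Q(t) = ∏_j (t - λ_j)`: if `μ`
is a real root of `P`, then `∑_j λ_j c_j/(μ - λ_j)² = -P′(μ)/(2 Q(μ))`; in particular this
sum vanishes (the eigenvector `v_μ` is null for the form `⟨y,z⟩ = ∑_j λ_j c_j y_j z_j`) if and
only if `μ` is a multiple root of `P`. -/
theorem null_eigenvector_iff_multiple_root {m : ℕ} (l : Fin m → ℝ)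
    (hinj : Function.Injective l) (hne : ∀ j, l j ≠ 0)
    (c : Fin m → ℝ) (hc : ∀ j, 0 < c j) (μ : ℝ) :
    let P : ℝ → ℝ := fun t =>
      (∏ j, (t - l j)) + 2 * ∑ j, l j * c j * ∏ k ∈ Finset.univ.erase j, (t - l k)
    let Q : ℝ → ℝ := fun t => ∏ j, (t - l j)
    P μ = 0 →
    ((∑ j, l j * c j / (μ - l j) ^ 2) = -(deriv P μ) / (2 * Q μ) ∧
      ((∑ j, l j * c j / (μ - l j) ^ 2) = 0 ↔ deriv P μ = 0)) := by
  intro P Q hP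
  -- μ is not equal to any l j
  have hD : ∀ j, μ - l j ≠ 0 := by
    intro j h0
    have hμ : μ = l j := by linarith [sub_eq_zero.mp h0]
    have hprodj : (∏ k ∈ Finset.univ.erase j, (μ - l k)) ≠ 0 := by
      rw [Finset.prod_ne_zero_iff]
      intro k hk
      have hkj : k ≠ j := Finset.ne_of_mem_erase hk
      have : l j ≠ l k := fun h => hkj (hinj h.symm)
      rw [hμ, sub_ne_zero]
      exact this
    have h1 : (∏ j, (μ - l j)) = 0 := Finset.prod_eq_zero (Finset.mem_univ j) h0
    have h2 : (∑ i, l i * c i * ∏ k ∈ Finset.univ.erase i, (μ - l k))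
        = l j * c j * ∏ k ∈ Finset.univ.erase j, (μ - l k) := by
      apply Finset.sum_eq_single
      · intro i _ hij
        have : (∏ k ∈ Finset.univ.erase i, (μ - l k)) = 0 :=
          Finset.prod_eq_zero (Finset.mem_erase.mpr ⟨fun h => hij h.symm, Finset.mem_univ j⟩) h0
        rw [this, mul_zero]
      · intro h; exact absurd (Finset.mem_univ j) h
    have hPμ : P μ = 2 * (l j * c j * ∏ k ∈ Finset.univ.erase j, (μ - l k)) := by
      simp only [P, h1, h2, zero_add]
    rw [hPμ] at hP
    have : l j * c j * ∏ k ∈ Finset.univ.erase j, (μ - l k) ≠ 0 :=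
      mul_ne_zero (mul_ne_zero (hne j) (ne_of_gt (hc j))) hprodj
    exact this (by linarith)
  set D : Fin m → ℝ := fun j => μ - l j with hDdef
  have hQprod : Q μ = ∏ j, D j := rfl
  have hQne : (∏ j, D j) ≠ 0 := Finset.prod_ne_zero_iff.mpr fun j _ => hD j
  -- key product identities
  have key1 : ∀ i : Fin m, (∏ k ∈ Finset.univ.erase i, D k) = (∏ k, D k) * (D i)⁻¹ := by
    intro i
    have h := Finset.mul_prod_erase Finset.univ D (Finset.mem_univ i)
    rw [← h, mul_comm (D i), mul_assoc, mul_inv_cancel₀ (hD i), mul_one]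
  have key2 : ∀ j i : Fin m, i ≠ j →
      (∏ k ∈ (Finset.univ.erase j).erase i, D k) = (∏ k, D k) * (D i)⁻¹ * (D j)⁻¹ := by
    intro j i hij
    have h := Finset.mul_prod_erase (Finset.univ.erase j) D
      (Finset.mem_erase.mpr ⟨hij, Finset.mem_univ i⟩)
    have h' : (∏ k ∈ (Finset.univ.erase j).erase i, D k)
        = (∏ k ∈ Finset.univ.erase j, D k) * (D i)⁻¹ := by
      rw [← h, mul_comm (D i), mul_assoc, mul_inv_cancel₀ (hD i), mul_one]
    rw [h', key1 j]; ring
  -- derivative computation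
  have hDerQ : HasDerivAt (fun t => ∏ j, (t - l j))
      (∑ i, ∏ k ∈ Finset.univ.erase i, (μ - l k)) μ := by
    have := HasDerivAt.fun_finsetProd (u := Finset.univ) (f := fun j t => t - l j)
      (f' := fun _ => (1 : ℝ)) (x := μ) (fun i _ => (hasDerivAt_id μ).sub_const (l i))
    simpa using this
  have hDerE : ∀ j : Fin m, HasDerivAt (fun t => ∏ k ∈ Finset.univ.erase j, (t - l k))
      (∑ i ∈ Finset.univ.erase j, ∏ k ∈ (Finset.univ.erase j).erase i, (μ - l k)) μ := by
    intro j
    have := HasDerivAt.fun_finsetProd (u := Finset.univ.erase j) (f := fun k t => t - l k)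
      (f' := fun _ => (1 : ℝ)) (x := μ) (fun i _ => (hasDerivAt_id μ).sub_const (l i))
    simpa using this
  have hDerP : HasDerivAt P
      ((∑ i, ∏ k ∈ Finset.univ.erase i, (μ - l k)) +
        2 * ∑ j, l j * c j *
          ∑ i ∈ Finset.univ.erase j, ∏ k ∈ (Finset.univ.erase j).erase i, (μ - l k)) μ := by
    apply hDerQ.add
    apply HasDerivAt.const_mul
    exact HasDerivAt.fun_sum fun j _ => (hDerE j).const_mul (l j * c j)
  have hderiv : deriv P μ =
      (∑ i, ∏ k ∈ Finset.univ.erase i, (μ - l k)) +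
        2 * ∑ j, l j * c j *
          ∑ i ∈ Finset.univ.erase j, ∏ k ∈ (Finset.univ.erase j).erase i, (μ - l k) :=
    hDerP.deriv
  -- abbreviations
  set S : ℝ := ∑ j, (D j)⁻¹ with hS
  set A : ℝ := ∑ j, l j * c j * (D j)⁻¹ with hA
  set B : ℝ := ∑ j, l j * c j / (μ - l j) ^ 2 with hB
  -- constraint from P μ = 0
  have hA' : 1 + 2 * A = 0 := by
    have hPμ : P μ = (∏ j, D j) * (1 + 2 * A) := by
      show (∏ j, (μ - l j)) + 2 * ∑ j, l j * c j * ∏ k ∈ Finset.univ.erase j, (μ - l k)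
        = (∏ j, D j) * (1 + 2 * A)
      have : ∀ j : Fin m, l j * c j * ∏ k ∈ Finset.univ.erase j, (μ - l k)
          = (∏ j, D j) * (l j * c j * (D j)⁻¹) := by
        intro j
        have : (∏ k ∈ Finset.univ.erase j, (μ - l k)) = (∏ k, D k) * (D j)⁻¹ := key1 j
        rw [this]; ring
      rw [Finset.sum_congr rfl fun j _ => this j, ← Finset.mul_sum, ← hA]
      have hq : (∏ j, (μ - l j)) = ∏ j, D j := rfl
      rw [hq]; ring
    rw [hPμ] at hP
    rcases mul_eq_zero.mp hP with h | h
    · exact absurd h hQne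
    · exact h
  -- deriv P μ = ∏D * (-2 B)
  have hE : deriv P μ = (∏ j, D j) * (-2 * B) := by
    rw [hderiv]
    have hfst : (∑ i, ∏ k ∈ Finset.univ.erase i, (μ - l k)) = (∏ j, D j) * S := by
      rw [hS, Finset.mul_sum]
      exact Finset.sum_congr rfl fun i _ => key1 i
    have hinner : ∀ j : Fin m,
        (∑ i ∈ Finset.univ.erase j, ∏ k ∈ (Finset.univ.erase j).erase i, (μ - l k))
          = (∏ k, D k) * (D j)⁻¹ * (S - (D j)⁻¹) := by
      intro j
      have h1 : (∑ i ∈ Finset.univ.erase j, ∏ k ∈ (Finset.univ.erase j).erase i, (μ - l k))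
          = ∑ i ∈ Finset.univ.erase j, (∏ k, D k) * (D j)⁻¹ * (D i)⁻¹ := by
        apply Finset.sum_congr rfl
        intro i hi
        have hij : i ≠ j := Finset.ne_of_mem_erase hi
        rw [key2 j i hij]; ring
      rw [h1, ← Finset.mul_sum]
      congr 1
      have := Finset.add_sum_erase Finset.univ (fun i => (D i)⁻¹) (Finset.mem_univ j)
      rw [hS]; linarith
    have hsnd : (∑ j, l j * c j *
        ∑ i ∈ Finset.univ.erase j, ∏ k ∈ (Finset.univ.erase j).erase i, (μ - l k))
        = (∏ k, D k) * (S * A - B) := by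
      rw [Finset.sum_congr rfl fun j _ => by rw [hinner j]]
      have hterm : ∀ j : Fin m,
          l j * c j * ((∏ k, D k) * (D j)⁻¹ * (S - (D j)⁻¹))
            = (∏ k, D k) * (S * (l j * c j * (D j)⁻¹) - l j * c j / (μ - l j) ^ 2) := by
        intro j
        have : l j * c j / (μ - l j) ^ 2 = l j * c j * ((D j)⁻¹ * (D j)⁻¹) := by
          rw [div_eq_mul_inv, sq, mul_inv]
        rw [this]; ring
      rw [Finset.sum_congr rfl fun j _ => hterm j, ← Finset.mul_sum,
        Finset.sum_sub_distrib, ← Finset.mul_sum, ← hA, ← hB]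
    rw [hfst, hsnd]
    have hz : S * (1 + 2 * A) = 0 := by rw [hA']; ring
    linear_combination (∏ j, D j) * hz
  constructor
  · rw [hE, hQprod]
    field_simp
  · rw [hE]
    constructor
    · intro h; rw [h]; ring
    · intro h
      rcases mul_eq_zero.mp h with h' | h'
      · exact absurd h' hQne
      · rcases mul_eq_zero.mp h' with h'' | h''
        · norm_num at h''
        · exact h''
end

section
/- Let 0 < λ_1 < λ_2 < … < λ_m be real numbers and c_1, …, c_m positive real numbers with ∑_{j=1}^m c_j = 1. Let P(t) = ∏_{j=1}^m (t − λ_j) + 2 ∑_{j=1}^m λ_j c_j ∏_{k≠j} (t − λ_k). Then (−1)^{m−1} P(0) > 0 and (−1)^{m−j} P(λ_j) > 0 for each j = 1, …, m; consequently P has exactly m distinct real roots μ_0 < 0 < μ_1 < … < μ_{m−1}, all simple, with λ_i < μ_i < λ_{i+1} for i = 1, …, m−1, and these account for all complex roots of P. -/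
open Finset Polynomial

private lemma aux_prod_neg (s : Finset ℕ) (f : ℕ → ℝ) :
    ∏ i ∈ s, -f i = (-1 : ℝ) ^ s.card * ∏ i ∈ s, f i := by
  rw [← Finset.prod_const (-1 : ℝ), ← Finset.prod_mul_distrib]
  simp

private lemma aux_sq (n : ℕ) : ((-1 : ℝ) ^ n) * ((-1 : ℝ) ^ n) = 1 := by
  rw [← mul_pow]; norm_num

/-- For `0 < λ_0 < … < λ_{m-1}` (re-indexed from 1-based `λ_1 < … < λ_m`) and
positive `c_j` with `∑ c_j = 1`, the polynomial
`P(t) = ∏_j (t - λ_j) + 2 ∑_j λ_j c_j ∏_{k≠j} (t - λ_k)` satisfies the stated sign conditions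
at `0` and at each `λ_j`, and has exactly `m` distinct real simple roots
`μ_0 < 0 < μ_1 < … < μ_{m-1}` with `λ_{i-1} < μ_i < λ_i` for `i = 1, …, m-1`, accounting for
all (complex) roots of `P`, i.e. `P(t) = ∏_i (t - μ_i)`. -/
theorem roots_interlace_all_positive (m : ℕ) (hm : 0 < m) (l : ℕ → ℝ)
    (hlpos : 0 < l 0) (hmono : ∀ i j, i < j → j < m → l i < l j)
    (c : ℕ → ℝ) (hc : ∀ j, j < m → 0 < c j)
    (hsum : ∑ j ∈ Finset.range m, c j = 1) :
    let P : ℝ → ℝ := fun t =>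
      (∏ j ∈ Finset.range m, (t - l j)) +
        2 * ∑ j ∈ Finset.range m, l j * c j * ∏ k ∈ (Finset.range m).erase j, (t - l k)
    (0 < (-1 : ℝ) ^ (m - 1) * P 0) ∧
    (∀ j, j < m → 0 < (-1 : ℝ) ^ (m - 1 - j) * P (l j)) ∧
    ∃ μ : ℕ → ℝ,
      (∀ i j, i < j → j < m → μ i < μ j) ∧
      μ 0 < 0 ∧
      (∀ i, 1 ≤ i → i < m → 0 < μ i) ∧
      (∀ i, 1 ≤ i → i < m → l (i - 1) < μ i ∧ μ i < l i) ∧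
      (∀ i, i < m → P (μ i) = 0) ∧
      (∀ t : ℝ, P t = ∏ i ∈ Finset.range m, (t - μ i)) := by
  classical
  intro P
  have hPdef : ∀ t, P t = (∏ j ∈ Finset.range m, (t - l j)) +
      2 * ∑ j ∈ Finset.range m, l j * c j * ∏ k ∈ (Finset.range m).erase j, (t - l k) :=
    fun t => rfl
  have hl : ∀ j, j < m → 0 < l j := by
    intro j hj
    rcases Nat.eq_zero_or_pos j with h | h
    · simpa [h] using hlpos
    · exact hlpos.trans (hmono 0 j h hj)
  -- the sign of the erased product at `l j`
  have hsplit : ∀ j, j < m →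
      (Finset.range m).erase j = Finset.range j ∪ Finset.Ico (j+1) m := by
    intro j hj; ext k
    simp only [Finset.mem_erase, Finset.mem_range, Finset.mem_union, Finset.mem_Ico]
    omega
  have hsign : ∀ j, j < m →
      0 < (-1:ℝ)^(m-1-j) * ∏ k ∈ (Finset.range m).erase j, (l j - l k) := by
    intro j hj
    have hdisj : Disjoint (Finset.range j) (Finset.Ico (j+1) m) := by
      rw [Finset.disjoint_left]
      intro k hk hk'
      simp only [Finset.mem_range] at hk
      simp only [Finset.mem_Ico] at hk'
      omega
    rw [hsplit j hj, Finset.prod_union hdisj]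
    have h1 : 0 < ∏ k ∈ Finset.range j, (l j - l k) :=
      Finset.prod_pos fun k hk => sub_pos.mpr (hmono k j (Finset.mem_range.mp hk) hj)
    have h3 : 0 < ∏ k ∈ Finset.Ico (j+1) m, (l k - l j) :=
      Finset.prod_pos fun k hk =>
        sub_pos.mpr (hmono j k (by have := (Finset.mem_Ico.mp hk).1; omega) (Finset.mem_Ico.mp hk).2)
    have h2 : ∏ k ∈ Finset.Ico (j+1) m, (l j - l k)
        = (-1:ℝ)^(m-1-j) * ∏ k ∈ Finset.Ico (j+1) m, (l k - l j) := by
      calc ∏ k ∈ Finset.Ico (j+1) m, (l j - l k)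
          = ∏ k ∈ Finset.Ico (j+1) m, -(l k - l j) := by simp [neg_sub]
        _ = (-1:ℝ)^(Finset.Ico (j+1) m).card * ∏ k ∈ Finset.Ico (j+1) m, (l k - l j) :=
            aux_prod_neg _ _
        _ = _ := by rw [Nat.card_Ico]; congr 2; omega
    rw [h2]
    have hsq := aux_sq (m-1-j)
    nlinarith [mul_pos h1 h3]
  -- evaluation at `l j`
  have hPl : ∀ j, j < m →
      P (l j) = 2 * (l j * c j * ∏ k ∈ (Finset.range m).erase j, (l j - l k)) := by
    intro j hj
    rw [hPdef]
    have h0 : ∏ k ∈ Finset.range m, (l j - l k) = 0 :=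
      Finset.prod_eq_zero (Finset.mem_range.mpr hj) (by ring)
    rw [h0, zero_add]
    congr 1
    rw [Finset.sum_eq_single j]
    · intro i hi hij
      have : ∏ k ∈ (Finset.range m).erase i, (l j - l k) = 0 :=
        Finset.prod_eq_zero (Finset.mem_erase.mpr ⟨Ne.symm hij, Finset.mem_range.mpr hj⟩)
          (by ring)
      rw [this, mul_zero]
    · intro h; exact absurd (Finset.mem_range.mpr hj) h
  have goal2 : ∀ j, j < m → 0 < (-1:ℝ)^(m-1-j) * P (l j) := by
    intro j hj
    rw [hPl j hj]
    have h1 := hsign j hj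
    have h2 := hl j hj
    have h3 := hc j hj
    nlinarith [mul_pos (mul_pos h2 h3) h1]
  -- evaluation at 0
  have hΛ : 0 < ∏ j ∈ Finset.range m, l j :=
    Finset.prod_pos fun j hj => hl j (Finset.mem_range.mp hj)
  have hP0 : P 0 = (-1:ℝ)^(m-1) * ∏ j ∈ Finset.range m, l j := by
    rw [hPdef]
    have h1 : ∏ j ∈ Finset.range m, ((0:ℝ) - l j)
        = (-1:ℝ)^m * ∏ j ∈ Finset.range m, l j := by
      simpa using aux_prod_neg (Finset.range m) l
    have h2 : ∀ j ∈ Finset.range m,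
        l j * c j * ∏ k ∈ (Finset.range m).erase j, ((0:ℝ) - l k)
        = ((-1:ℝ)^(m-1) * ∏ k ∈ Finset.range m, l k) * c j := by
      intro j hj
      have he : ∏ k ∈ (Finset.range m).erase j, ((0:ℝ) - l k)
          = (-1:ℝ)^(m-1) * ∏ k ∈ (Finset.range m).erase j, l k := by
        have := aux_prod_neg ((Finset.range m).erase j) l
        simpa [Finset.card_erase_of_mem hj, Finset.card_range] using this
      rw [he, ← Finset.mul_prod_erase _ l hj]
      ring
    rw [h1, Finset.sum_congr rfl h2, ← Finset.mul_sum, hsum, mul_one]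
    have hm1 : m - 1 + 1 = m := Nat.succ_pred_eq_of_pos hm
    have hpm : (-1:ℝ)^m = -(-1:ℝ)^(m-1) := by
      conv_lhs => rw [← hm1]
      rw [pow_succ]; ring
    rw [hpm]; ring
  have goal1 : 0 < (-1:ℝ)^(m-1) * P 0 := by
    rw [hP0]
    have hsq := aux_sq (m-1)
    nlinarith [hΛ]
  -- continuity
  have hcont : Continuous P := by
    have : P = fun t => (∏ j ∈ Finset.range m, (t - l j)) +
        2 * ∑ j ∈ Finset.range m, l j * c j * ∏ k ∈ (Finset.range m).erase j, (t - l k) :=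
      funext hPdef
    rw [this]
    apply Continuous.add
    · exact continuous_finset_prod _ fun j _ => continuous_id.sub continuous_const
    · exact continuous_const.mul (continuous_finset_sum _ fun j _ =>
        continuous_const.mul (continuous_finset_prod _ fun k _ =>
          continuous_id.sub continuous_const))
  -- intermediate value theorem roots
  have hIVT : ∀ i, 1 ≤ i → i < m → ∃ x, x ∈ Set.Ioo (l (i-1)) (l i) ∧ P x = 0 := by
    intro i h1i him
    have hle : l (i-1) < l i := hmono (i-1) i (by omega) him
    have ha := goal2 (i-1) (by omega)
    have hb := goal2 i him
    have hexp : m - 1 - (i-1) = (m - 1 - i) + 1 := by omega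
    rw [hexp, pow_succ] at ha
    rcases Nat.even_or_odd (m - 1 - i) with hpar | hpar
    · rw [hpar.neg_one_pow] at ha hb
      have ha' : P (l (i-1)) < 0 := by nlinarith
      have hb' : 0 < P (l i) := by nlinarith
      obtain ⟨x, hx, hPx⟩ :=
        intermediate_value_Ioo hle.le hcont.continuousOn (Set.mem_Ioo.mpr ⟨ha', hb'⟩)
      exact ⟨x, hx, hPx⟩
    · rw [hpar.neg_one_pow] at ha hb
      have ha' : 0 < P (l (i-1)) := by nlinarith
      have hb' : P (l i) < 0 := by nlinarith
      obtain ⟨x, hx, hPx⟩ :=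
        intermediate_value_Ioo' hle.le hcont.continuousOn (Set.mem_Ioo.mpr ⟨hb', ha'⟩)
      exact ⟨x, hx, hPx⟩
  let μp : ℕ → ℝ := fun i => if h : 1 ≤ i ∧ i < m then (hIVT i h.1 h.2).choose else 0
  have hμp : ∀ i, 1 ≤ i → i < m → l (i-1) < μp i ∧ μp i < l i ∧ P (μp i) = 0 := by
    intro i h1 h2
    have hspec := (hIVT i h1 h2).choose_spec
    have : μp i = (hIVT i h1 h2).choose := by
      simp only [μp, dif_pos (show 1 ≤ i ∧ i < m from ⟨h1, h2⟩)]
    rw [this]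
    exact ⟨hspec.1.1, hspec.1.2, hspec.2⟩
  have hμppos : ∀ i ∈ Finset.Ico 1 m, 0 < μp i := by
    intro i hi
    obtain ⟨h1, h2⟩ := Finset.mem_Ico.mp hi
    have := (hμp i h1 h2).1
    have hl0 : 0 < l (i-1) := hl (i-1) (by omega)
    linarith
  have hμpmono : ∀ i j, 1 ≤ i → i < j → j < m → μp i < μp j := by
    intro i j h1 hij hjm
    have hi := hμp i h1 (lt_trans hij hjm)
    have hj := hμp j (by omega) hjm
    have hlij : l i ≤ l (j-1) := by
      rcases eq_or_lt_of_le (show i ≤ j - 1 by omega) with h | h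
      · rw [h]
      · exact (hmono i (j-1) h (by omega)).le
    linarith [hi.2.1, hj.1]
  -- the polynomial
  set q : Polynomial ℝ := (∏ j ∈ Finset.range m, (X - C (l j))) +
      C 2 * ∑ j ∈ Finset.range m,
        C (l j * c j) * ∏ k ∈ (Finset.range m).erase j, (X - C (l k)) with hq
  have hqeval : ∀ t, q.eval t = P t := by
    intro t
    rw [hPdef, hq]
    simp [eval_prod, eval_finset_sum]
  have hp1m : (∏ j ∈ Finset.range m, (X - C (l j))).Monic :=
    monic_prod_of_monic _ _ fun j _ => monic_X_sub_C (l j)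
  have hp1deg : (∏ j ∈ Finset.range m, (X - C (l j))).degree = (m : WithBot ℕ) := by
    rw [degree_eq_natDegree hp1m.ne_zero,
      natDegree_prod_of_monic _ _ fun j _ => monic_X_sub_C (l j)]
    simp
  have hp2d : (C 2 * ∑ j ∈ Finset.range m,
      C (l j * c j) * ∏ k ∈ (Finset.range m).erase j, (X - C (l k))).degree
      < (m : WithBot ℕ) := by
    apply lt_of_le_of_lt (degree_mul_le _ _)
    have hsumd : (∑ j ∈ Finset.range m,
        C (l j * c j) * ∏ k ∈ (Finset.range m).erase j, (X - C (l k))).degree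
        < (m : WithBot ℕ) := by
      apply lt_of_le_of_lt (degree_sum_le _ _)
      rw [Finset.sup_lt_iff (by exact_mod_cast WithBot.bot_lt_coe m)]
      intro j hj
      apply lt_of_le_of_lt (degree_mul_le _ _)
      have hme : (∏ k ∈ (Finset.range m).erase j, (X - C (l k))).degree
          = ((m - 1 : ℕ) : WithBot ℕ) := by
        rw [degree_eq_natDegree (monic_prod_of_monic _ _ fun k _ => monic_X_sub_C (l k)).ne_zero,
          natDegree_prod_of_monic _ _ fun k _ => monic_X_sub_C (l k)]
        simp [Finset.card_erase_of_mem hj]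
      calc (C (l j * c j)).degree
            + (∏ k ∈ (Finset.range m).erase j, (X - C (l k))).degree
          ≤ 0 + ((m - 1 : ℕ) : WithBot ℕ) := add_le_add degree_C_le (le_of_eq hme)
        _ = ((m - 1 : ℕ) : WithBot ℕ) := zero_add _
        _ < (m : WithBot ℕ) := by exact_mod_cast (by omega : m - 1 < m)
    exact lt_of_le_of_lt (add_le_add degree_C_le le_rfl) (by rw [zero_add]; exact hsumd)
  have hqm : q.Monic := hp1m.add_of_left (by rw [hp1deg]; exact hp2d)
  have hqdeg : q.degree = (m : WithBot ℕ) := by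
    rw [hq, degree_add_eq_left_of_degree_lt (by rw [hp1deg]; exact hp2d), hp1deg]
  have hqd : q.natDegree = m := natDegree_eq_of_degree_eq_some hqdeg
  have hqne : q ≠ 0 := hqm.ne_zero
  have hroot : ∀ i ∈ Finset.Ico 1 m, μp i ∈ q.roots := by
    intro i hi
    obtain ⟨h1, h2⟩ := Finset.mem_Ico.mp hi
    rw [mem_roots hqne]
    exact (hqeval (μp i)).trans (hμp i h1 h2).2.2
  have hnodup : ((Finset.Ico 1 m).val.map μp).Nodup := by
    apply Multiset.Nodup.map_on _ (Finset.Ico 1 m).nodup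
    intro i hi j hj hij
    by_contra h
    rcases Nat.lt_or_ge i j with hlt | hge
    · have := hμpmono i j (Finset.mem_Ico.mp hi).1 hlt (Finset.mem_Ico.mp hj).2
      linarith [this, le_of_eq hij]
    · have hlt : j < i := by omega
      have := hμpmono j i (Finset.mem_Ico.mp hj).1 hlt (Finset.mem_Ico.mp hi).2
      linarith [this, le_of_eq hij]
  have hMS : (Finset.Ico 1 m).val.map μp ≤ q.roots := by
    rw [Multiset.le_iff_count]
    intro a
    by_cases ha : a ∈ (Finset.Ico 1 m).val.map μp
    · have h1 : ((Finset.Ico 1 m).val.map μp).count a = 1 :=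
        Multiset.count_eq_one_of_mem hnodup ha
      rw [h1, Multiset.one_le_count_iff_mem]
      obtain ⟨i, hi, rfl⟩ := Multiset.mem_map.mp ha
      exact hroot i hi
    · rw [Multiset.count_eq_zero_of_notMem ha]
      exact Nat.zero_le _
  have hRdvd : (∏ i ∈ Finset.Ico 1 m, (X - C (μp i))) ∣ q := by
    have h1 : (((Finset.Ico 1 m).val.map μp).map (fun a => X - C a)).prod ∣ q :=
      dvd_trans (Multiset.prod_dvd_prod_of_le (Multiset.map_le_map hMS))
        (prod_multiset_X_sub_C_dvd q)
    have h2 : (((Finset.Ico 1 m).val.map μp).map (fun a => X - C a)).prod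
        = ∏ i ∈ Finset.Ico 1 m, (X - C (μp i)) := by
      rw [Multiset.map_map]
      rfl
    rwa [h2] at h1
  have hRm : (∏ i ∈ Finset.Ico 1 m, (X - C (μp i))).Monic :=
    monic_prod_of_monic _ _ fun i _ => monic_X_sub_C _
  have hRd : (∏ i ∈ Finset.Ico 1 m, (X - C (μp i))).natDegree = m - 1 := by
    rw [natDegree_prod_of_monic _ _ fun i _ => monic_X_sub_C _]
    simp
  obtain ⟨S, hS⟩ := hRdvd
  have hSm : S.Monic := hRm.of_mul_monic_left (hS ▸ hqm)
  have hSd : S.natDegree = 1 := by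
    have h := hqd
    rw [hS, natDegree_mul hRm.ne_zero hSm.ne_zero, hRd] at h
    omega
  have hSeq : S = X + C (S.coeff 0) := hSm.eq_X_add_C hSd
  set r : ℝ := - S.coeff 0 with hr
  have hfact : ∀ t, P t = (t - r) * ∏ i ∈ Finset.Ico 1 m, (t - μp i) := by
    intro t
    rw [← hqeval, hS, eval_mul, hSeq]
    simp [eval_prod, hr]
    ring
  have hQpos : 0 < ∏ i ∈ Finset.Ico 1 m, μp i := Finset.prod_pos hμppos
  have hrneg : r < 0 := by
    have h1 := hfact 0
    rw [hP0] at h1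
    have h2 : ∏ i ∈ Finset.Ico 1 m, ((0:ℝ) - μp i)
        = (-1:ℝ)^(m-1) * ∏ i ∈ Finset.Ico 1 m, μp i := by
      calc ∏ i ∈ Finset.Ico 1 m, ((0:ℝ) - μp i)
          = ∏ i ∈ Finset.Ico 1 m, -(μp i) := by simp
        _ = _ := by rw [aux_prod_neg]; simp [Nat.card_Ico]
    rw [h2] at h1
    rcases Nat.even_or_odd (m - 1) with hpar | hpar
    · rw [hpar.neg_one_pow] at h1
      nlinarith [hΛ, hQpos]
    · rw [hpar.neg_one_pow] at h1
      nlinarith [hΛ, hQpos]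
  have hrange : Finset.range m = insert 0 (Finset.Ico 1 m) := by
    ext k
    simp only [Finset.mem_range, Finset.mem_insert, Finset.mem_Ico]
    omega
  have hfact2 : ∀ t, P t = ∏ i ∈ Finset.range m, (t - (if i = 0 then r else μp i)) := by
    intro t
    rw [hfact t, hrange, Finset.prod_insert (by simp)]
    simp only [if_pos rfl]
    congr 1
    apply Finset.prod_congr rfl
    intro i hi
    rw [if_neg (by have := (Finset.mem_Ico.mp hi).1; omega)]
  refine ⟨goal1, goal2, fun i => if i = 0 then r else μp i, ?_, ?_, ?_, ?_, ?_, ?_⟩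
  · intro i j hij hjm
    by_cases hi : i = 0
    · subst hi
      simp only [reduceIte, if_neg (show j ≠ 0 by omega)]
      have := hμppos j (Finset.mem_Ico.mpr ⟨by omega, hjm⟩)
      linarith [hrneg]
    · simp only [if_neg hi, if_neg (show j ≠ 0 by omega)]
      exact hμpmono i j (by omega) hij hjm
  · simpa using hrneg
  · intro i h1 h2
    simp only [if_neg (show i ≠ 0 by omega)]
    exact hμppos i (Finset.mem_Ico.mpr ⟨h1, h2⟩)
  · intro i h1 h2
    simp only [if_neg (show i ≠ 0 by omega)]
    exact ⟨(hμp i h1 h2).1, (hμp i h1 h2).2.1⟩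
  · intro i him
    rw [hfact2]
    exact Finset.prod_eq_zero (Finset.mem_range.mpr him) (by ring)
  · exact hfact2
end

section
/- Let λ_0 < 0 < λ_1 < … < λ_{m−1} be real numbers and c_0, …, c_{m−1} positive real numbers with ∑_{j=0}^{m−1} c_j = 1. Let P(t) = ∏_{j=0}^{m−1} (t − λ_j) + 2 ∑_{j=0}^{m−1} λ_j c_j ∏_{k≠j} (t − λ_k). Then (−1)^m P(λ_0) > 0, (−1)^m P(0) > 0, and (−1)^{m−j−1} P(λ_j) > 0 for each j = 1, …, m−1; consequently P has at least m−2 distinct positive real roots μ_1 < … < μ_{m−2} with λ_i < μ_i < λ_{i+1} for i = 1, …, m−2. -/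
open Finset

lemma prod_neg_aux (s : Finset ℕ) (f : ℕ → ℝ) :
    ∏ k ∈ s, (-(f k)) = (-1) ^ s.card * ∏ k ∈ s, f k := by
  rw [← Finset.prod_const (-1 : ℝ), ← Finset.prod_mul_distrib]; simp

/-- For `λ_0 < 0 < λ_1 < … < λ_{m-1}` and positive `c_j` with `∑ c_j = 1`, the
polynomial `P(t) = ∏_j (t - λ_j) + 2 ∑_j λ_j c_j ∏_{k≠j} (t - λ_k)` satisfies
`(-1)^m P(λ_0) > 0`, `(-1)^m P(0) > 0`, `(-1)^{m-j-1} P(λ_j) > 0` for `j = 1, …, m-1`;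
consequently `P` has at least `m-2` distinct positive real roots `μ_1 < … < μ_{m-2}` with
`λ_i < μ_i < λ_{i+1}` for `i = 1, …, m-2`. -/
theorem roots_interlace_with_negative (m : ℕ) (hm : 2 ≤ m) (l : ℕ → ℝ)
    (hneg : l 0 < 0) (hpos : 0 < l 1) (hmono : ∀ i j, i < j → j < m → l i < l j)
    (c : ℕ → ℝ) (hc : ∀ j, j < m → 0 < c j)
    (hsum : ∑ j ∈ Finset.range m, c j = 1) :
    let P : ℝ → ℝ := fun t =>
      (∏ j ∈ Finset.range m, (t - l j)) +
        2 * ∑ j ∈ Finset.range m, l j * c j * ∏ k ∈ (Finset.range m).erase j, (t - l k)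
    (0 < (-1 : ℝ) ^ m * P (l 0)) ∧
    (0 < (-1 : ℝ) ^ m * P 0) ∧
    (∀ j, 1 ≤ j → j < m → 0 < (-1 : ℝ) ^ (m - j - 1) * P (l j)) ∧
    ∃ μ : ℕ → ℝ,
      (∀ i j, 1 ≤ i → i < j → j ≤ m - 2 → μ i < μ j) ∧
      (∀ i, 1 ≤ i → i ≤ m - 2 → P (μ i) = 0 ∧ 0 < μ i ∧ l i < μ i ∧ μ i < l (i + 1)) := by
  intro P
  have hcont : Continuous P := by
    have : Continuous fun t : ℝ =>
        (∏ j ∈ Finset.range m, (t - l j)) +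
          2 * ∑ j ∈ Finset.range m, l j * c j * ∏ k ∈ (Finset.range m).erase j, (t - l k) := by
      fun_prop
    exact this
  have hlpos : ∀ j, 1 ≤ j → j < m → 0 < l j := by
    intro j hj hjm
    rcases eq_or_lt_of_le hj with h | h
    · exact h ▸ hpos
    · exact lt_trans hpos (hmono 1 j h hjm)
  -- value of P at l j
  have hval : ∀ j, j < m → P (l j) =
      2 * (l j * c j * ∏ k ∈ (Finset.range m).erase j, (l j - l k)) := by
    intro j hjm
    have h1 : (∏ k ∈ Finset.range m, (l j - l k)) = 0 :=
      Finset.prod_eq_zero (Finset.mem_range.2 hjm) (by ring)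
    have h2 : ∑ k ∈ Finset.range m, l k * c k * ∏ i ∈ (Finset.range m).erase k, (l j - l i)
        = l j * c j * ∏ i ∈ (Finset.range m).erase j, (l j - l i) := by
      apply Finset.sum_eq_single_of_mem j (Finset.mem_range.2 hjm)
      intro k hk hkj
      have hjk : j ∈ (Finset.range m).erase k :=
        Finset.mem_erase.2 ⟨Ne.symm hkj, Finset.mem_range.2 hjm⟩
      rw [Finset.prod_eq_zero hjk (by ring), mul_zero]
    show (∏ k ∈ Finset.range m, (l j - l k)) + 2 * _ = _
    rw [h1, h2, zero_add]
  -- sign of the erased product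
  have hsign : ∀ j, j < m → ∃ q : ℝ, 0 < q ∧
      (∏ k ∈ (Finset.range m).erase j, (l j - l k)) = (-1) ^ (m - 1 - j) * q := by
    intro j hjm
    have hsplit : (Finset.range m).erase j = Finset.range j ∪ Finset.Ico (j + 1) m := by
      ext k
      simp only [Finset.mem_erase, Finset.mem_union, Finset.mem_Ico, Finset.mem_range]
      omega
    have hdisj : Disjoint (Finset.range j) (Finset.Ico (j + 1) m) := by
      rw [Finset.disjoint_left]; intro a ha hb
      simp only [Finset.mem_range] at ha
      simp only [Finset.mem_Ico] at hb
      omega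
    have hp1 : 0 < ∏ k ∈ Finset.range j, (l j - l k) := by
      apply Finset.prod_pos
      intro k hk
      have := hmono k j (Finset.mem_range.1 hk) hjm
      linarith
    have hp2 : 0 < ∏ k ∈ Finset.Ico (j + 1) m, (l k - l j) := by
      apply Finset.prod_pos
      intro k hk
      simp only [Finset.mem_Ico] at hk
      have := hmono j k hk.1 hk.2
      linarith
    refine ⟨(∏ k ∈ Finset.range j, (l j - l k)) * ∏ k ∈ Finset.Ico (j + 1) m, (l k - l j),
      mul_pos hp1 hp2, ?_⟩
    rw [hsplit, Finset.prod_union hdisj]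
    have : ∏ k ∈ Finset.Ico (j + 1) m, (l j - l k)
        = (-1) ^ (m - 1 - j) * ∏ k ∈ Finset.Ico (j + 1) m, (l k - l j) := by
      rw [show (m - 1 - j) = (Finset.Ico (j + 1) m).card by rw [Nat.card_Ico]; omega]
      rw [← prod_neg_aux]
      congr 1 with k
      ring
    rw [this]; ring
  have hsq : ∀ n : ℕ, ((-1 : ℝ)) ^ n * ((-1 : ℝ)) ^ n = 1 := by
    intro n
    rw [← pow_add]
    exact Even.neg_one_pow ⟨n, rfl⟩
  -- part 3
  have part3 : ∀ j, 1 ≤ j → j < m → 0 < (-1 : ℝ) ^ (m - j - 1) * P (l j) := by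
    intro j hj hjm
    obtain ⟨q, hq, hQ⟩ := hsign j hjm
    rw [hval j hjm, hQ, show m - j - 1 = m - 1 - j from by omega]
    have hlj := hlpos j hj hjm
    have hcj := hc j hjm
    have he := hsq (m - 1 - j)
    nlinarith [mul_pos (mul_pos hlj hcj) hq]
  -- part 1
  have part1 : 0 < (-1 : ℝ) ^ m * P (l 0) := by
    obtain ⟨q, hq, hQ⟩ := hsign 0 (by omega)
    rw [hval 0 (by omega), hQ]
    have hm1 : ((-1 : ℝ)) ^ m = -(-1 : ℝ) ^ (m - 1) := by
      conv_lhs => rw [show m = (m - 1) + 1 by omega]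
      rw [pow_succ]; ring
    rw [show m - 1 - 0 = m - 1 from by omega, hm1]
    have hc0 := hc 0 (by omega)
    have he := hsq (m - 1)
    have hre : -(-1 : ℝ) ^ (m - 1) * (2 * (l 0 * c 0 * ((-1) ^ (m - 1) * q)))
        = -2 * l 0 * (c 0 * q) * ((-1) ^ (m - 1) * (-1) ^ (m - 1)) := by ring
    rw [hre, he, mul_one]
    nlinarith [mul_pos hc0 hq]
  -- part 2
  have part2 : 0 < (-1 : ℝ) ^ m * P 0 := by
    set A : ℝ := ∏ k ∈ Finset.range m, l k with hA
    have h0 : P 0 = (-1 : ℝ) ^ (m - 1) * A := by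
      have hprod : (∏ k ∈ Finset.range m, ((0 : ℝ) - l k)) = (-1) ^ m * A := by
        have h := prod_neg_aux (Finset.range m) l
        rw [Finset.card_range] at h
        simpa [zero_sub] using h
      have hterm : ∀ j ∈ Finset.range m,
          l j * c j * ∏ k ∈ (Finset.range m).erase j, ((0 : ℝ) - l k)
          = c j * ((-1) ^ (m - 1) * A) := by
        intro j hjm
        have hcard : ((Finset.range m).erase j).card = m - 1 := by
          rw [Finset.card_erase_of_mem hjm, Finset.card_range]
        have h1 : (∏ k ∈ (Finset.range m).erase j, ((0 : ℝ) - l k))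
            = (-1) ^ (m - 1) * ∏ k ∈ (Finset.range m).erase j, l k := by
          have h := prod_neg_aux ((Finset.range m).erase j) l
          rw [hcard] at h
          simpa [zero_sub] using h
        have hAe : A = l j * ∏ k ∈ (Finset.range m).erase j, l k :=
          (Finset.mul_prod_erase _ _ hjm).symm
        rw [h1, hAe]
        ring
      show (∏ k ∈ Finset.range m, ((0 : ℝ) - l k)) + 2 * _ = _
      rw [hprod, Finset.sum_congr rfl hterm, ← Finset.sum_mul, hsum,
        show ((-1 : ℝ)) ^ m = -(-1 : ℝ) ^ (m - 1) from by
          conv_lhs => rw [show m = (m - 1) + 1 by omega]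
          rw [pow_succ]; ring]
      ring
    have hApos : 0 < -A := by
      rw [hA, ← Finset.mul_prod_erase _ _ (Finset.mem_range.2 (show 0 < m by omega))]
      have : 0 < ∏ k ∈ (Finset.range m).erase 0, l k := by
        apply Finset.prod_pos
        intro k hk
        simp only [Finset.mem_erase, Finset.mem_range] at hk
        exact hlpos k (by omega) hk.2
      nlinarith
    rw [h0, show ((-1 : ℝ)) ^ m = -(-1 : ℝ) ^ (m - 1) from by
      conv_lhs => rw [show m = (m - 1) + 1 by omega]
      rw [pow_succ]; ring]
    have he := hsq (m - 1)
    nlinarith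
  refine ⟨part1, part2, part3, ?_⟩
  -- existence of roots
  have hex : ∀ i, ∃ x : ℝ, 1 ≤ i → i ≤ m - 2 → P x = 0 ∧ l i < x ∧ x < l (i + 1) := by
    intro i
    by_cases hi : 1 ≤ i ∧ i ≤ m - 2
    · obtain ⟨hi1, hi2⟩ := hi
      have him : i < m := by omega
      have hi1m : i + 1 < m := by omega
      have hlt : l i < l (i + 1) := hmono i (i + 1) (by omega) hi1m
      have hPi := part3 i hi1 him
      have hPi1 := part3 (i + 1) (by omega) hi1m
      rw [show m - i - 1 = (m - i - 2) + 1 from by omega, pow_succ] at hPi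
      rw [show m - (i + 1) - 1 = m - i - 2 from by omega] at hPi1
      set e : ℝ := (-1 : ℝ) ^ (m - i - 2) with hedef
      have he := hsq (m - i - 2)
      rw [← hedef] at he
      have hopp : (P (l i) < 0 ∧ 0 < P (l (i + 1))) ∨ (P (l (i + 1)) < 0 ∧ 0 < P (l i)) := by
        rcases lt_trichotomy (P (l i)) 0 with h | h | h
        · left; refine ⟨h, ?_⟩; nlinarith
        · exfalso; rw [h] at hPi; simp at hPi
        · right; refine ⟨?_, h⟩; nlinarith
      rcases hopp with ⟨h1, h2⟩ | ⟨h1, h2⟩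
      · obtain ⟨x, hx, hPx⟩ := intermediate_value_Ioo (le_of_lt hlt) hcont.continuousOn
          (Set.mem_Ioo.2 ⟨h1, h2⟩)
        exact ⟨x, fun _ _ => ⟨hPx, hx.1, hx.2⟩⟩
      · obtain ⟨x, hx, hPx⟩ := intermediate_value_Ioo' (le_of_lt hlt) hcont.continuousOn
          (Set.mem_Ioo.2 ⟨h1, h2⟩)
        exact ⟨x, fun _ _ => ⟨hPx, hx.1, hx.2⟩⟩
    · exact ⟨0, fun h1 h2 => absurd ⟨h1, h2⟩ hi⟩
  choose μ hμ using hex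
  have hfact : ∀ i, 1 ≤ i → i ≤ m - 2 → P (μ i) = 0 ∧ 0 < μ i ∧ l i < μ i ∧ μ i < l (i + 1) := by
    intro i hi1 hi2
    obtain ⟨h1, h2, h3⟩ := hμ i hi1 hi2
    refine ⟨h1, ?_, h2, h3⟩
    have hli : 0 < l i := hlpos i hi1 (by omega)
    linarith
  refine ⟨μ, ?_, hfact⟩
  intro i j hi hij hj
  have h1 := hfact i hi (by omega)
  have h2 := hfact j (by omega) hj
  have : l (i + 1) ≤ l j := by
    rcases eq_or_lt_of_le (show i + 1 ≤ j by omega) with h | h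
    · exact h ▸ le_refl _
    · exact le_of_lt (hmono (i + 1) j h (by omega))
  linarith [h1.2.2.2, h2.2.2.1]
end

section
/- Let λ_0 < 0 < λ_1 < … < λ_{m−1} be real numbers (pairwise distinct and nonzero) and c_0, …, c_{m−1} positive real numbers. Let P(t) = ∏_{j=0}^{m−1} (t − λ_j) + 2 ∑_{j=0}^{m−1} λ_j c_j ∏_{k≠j} (t − λ_k). Then P has at most one real multiple root: there do not exist two distinct real numbers μ ≠ μ′ with P(μ) = P′(μ) = 0 and P(μ′) = P′(μ′) = 0. -/
open Finset


-- Step 2 lemma: at a multiple root avoiding the l j's, the two sum conditions hold.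
lemma key_facts (m : ℕ) (l c : ℕ → ℝ) (μ : ℝ)
    (hμ : ∀ j ∈ Finset.range m, μ ≠ l j)
    (hP : (∏ j ∈ Finset.range m, (μ - l j)) +
        2 * ∑ j ∈ Finset.range m, l j * c j * ∏ k ∈ (Finset.range m).erase j, (μ - l k) = 0)
    (hP' : deriv (fun t => (∏ j ∈ Finset.range m, (t - l j)) +
        2 * ∑ j ∈ Finset.range m, l j * c j * ∏ k ∈ (Finset.range m).erase j, (t - l k)) μ = 0) :
    (∑ j ∈ Finset.range m, l j * c j * (μ - l j)⁻¹ = -(1/2)) ∧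
    (∑ j ∈ Finset.range m, l j * c j * ((μ - l j)⁻¹)^2 = 0) := by
  set S := Finset.range m with hS
  have hsub : ∀ j ∈ S, μ - l j ≠ 0 := fun j hj => sub_ne_zero.mpr (hμ j hj)
  set Q : ℝ → ℝ := fun t => ∏ j ∈ S, (t - l j) with hQdef
  set F : ℝ → ℝ := fun t => 1 + 2 * ∑ j ∈ S, l j * c j * (t - l j)⁻¹ with hFdef
  set P : ℝ → ℝ := fun t => (∏ j ∈ S, (t - l j)) +
        2 * ∑ j ∈ S, l j * c j * ∏ k ∈ S.erase j, (t - l k) with hPdef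
  -- P = Q * F away from the roots
  have hPQF : ∀ t : ℝ, (∀ j ∈ S, t ≠ l j) → P t = Q t * F t := by
    intro t ht
    have ht' : ∀ j ∈ S, t - l j ≠ 0 := fun j hj => sub_ne_zero.mpr (ht j hj)
    have hterm : ∀ j ∈ S, Q t * (l j * c j * (t - l j)⁻¹)
        = l j * c j * ∏ k ∈ S.erase j, (t - l k) := by
      intro j hj
      have hq : Q t = (t - l j) * ∏ k ∈ S.erase j, (t - l k) :=
        (Finset.mul_prod_erase S _ hj).symm
      rw [hq]
      field_simp [ht' j hj]
    have key : Q t * (2 * ∑ j ∈ S, l j * c j * (t - l j)⁻¹)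
        = 2 * ∑ j ∈ S, Q t * (l j * c j * (t - l j)⁻¹) := by
      rw [mul_left_comm, Finset.mul_sum]
    simp only [hPdef, hFdef, hQdef]
    rw [mul_add, mul_one]
    congr 1
    show (2:ℝ) * ∑ j ∈ S, l j * c j * ∏ k ∈ S.erase j, (t - l k) = _
    rw [key]
    congr 1
    exact (Finset.sum_congr rfl hterm).symm
  -- neighborhood equality
  have hopen : IsOpen {t : ℝ | ∀ j ∈ S, t ≠ l j} := by
    have : {t : ℝ | ∀ j ∈ S, t ≠ l j} = (↑(S.image l) : Set ℝ)ᶜ := by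
      ext t
      simp [Set.mem_compl_iff, Finset.mem_image, not_exists]
      tauto
    rw [this]
    exact (Set.Finite.isClosed (Finset.finite_toSet _)).isOpen_compl
  have hmem : μ ∈ {t : ℝ | ∀ j ∈ S, t ≠ l j} := hμ
  have hev : P =ᶠ[nhds μ] fun t => Q t * F t :=
    Filter.eventuallyEq_of_mem (hopen.mem_nhds hmem) (fun t ht => hPQF t ht)
  -- derivatives
  have hQdiff : DifferentiableAt ℝ Q μ := by
    have : HasDerivAt Q (∑ i ∈ S, (∏ j ∈ S.erase i, (μ - l j)) * 1) μ := by
      apply HasDerivAt.fun_finsetProd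
      intro i _
      exact (hasDerivAt_id μ).sub_const (l i)
    exact this.differentiableAt
  have hF : HasDerivAt F (2 * ∑ j ∈ S, -(l j * c j) * ((μ - l j)⁻¹)^2) μ := by
    have hsumF : HasDerivAt (fun t => ∑ j ∈ S, l j * c j * (t - l j)⁻¹)
        (∑ j ∈ S, -(l j * c j) * ((μ - l j)⁻¹)^2) μ := by
      apply HasDerivAt.fun_sum
      intro j hj
      have hd : HasDerivAt (fun t => t - l j) 1 μ := (hasDerivAt_id μ).sub_const (l j)
      have := (hasDerivAt_const μ (l j * c j)).div hd (hsub j hj)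
      have heq : (0 * (μ - l j) - l j * c j * 1) / (μ - l j) ^ 2
          = -(l j * c j) * ((μ - l j)⁻¹)^2 := by
        field_simp
        ring
      rw [heq] at this
      exact this.congr_deriv rfl |>.congr_of_eventuallyEq (by
        filter_upwards with t
        rw [div_eq_mul_inv]
        rfl)
    exact (hsumF.const_mul 2).const_add 1
  -- F μ = 0
  have hQμ : Q μ ≠ 0 := Finset.prod_ne_zero_iff.mpr hsub
  have hPμ : P μ = 0 := hP
  have hFμ : F μ = 0 := by
    have h0 : Q μ * F μ = 0 := by rw [← hPQF μ hμ]; exact hPμ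
    exact (mul_eq_zero.mp h0).resolve_left hQμ
  have hsum1 : ∑ j ∈ S, l j * c j * (μ - l j)⁻¹ = -(1/2) := by
    have : (1 : ℝ) + 2 * ∑ j ∈ S, l j * c j * (μ - l j)⁻¹ = 0 := hFμ
    linarith
  -- derivative condition
  have hderiv : deriv P μ = Q μ * (2 * ∑ j ∈ S, -(l j * c j) * ((μ - l j)⁻¹)^2) := by
    rw [hev.deriv_eq, deriv_fun_mul hQdiff hF.differentiableAt, hFμ, mul_zero, zero_add,
      hF.deriv]
  rw [hP'] at hderiv
  have h2 : ∑ j ∈ S, -(l j * c j) * ((μ - l j)⁻¹)^2 = 0 := by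
    rcases mul_eq_zero.mp hderiv.symm with h | h
    · exact absurd h hQμ
    · linarith
  refine ⟨hsum1, ?_⟩
  have h3 : ∑ j ∈ S, l j * c j * ((μ - l j)⁻¹)^2 = 0 := by
    have : ∀ j ∈ S, -(l j * c j) * ((μ - l j)⁻¹)^2
        = -(l j * c j * ((μ - l j)⁻¹)^2) := fun j _ => by ring
    rw [Finset.sum_congr rfl this] at h2
    simpa using h2
  exact h3

-- Step 1: a root of P is none of the l j.
lemma root_ne (m : ℕ) (l c : ℕ → ℝ)
    (hlne : ∀ i ∈ Finset.range m, ∀ j ∈ Finset.range m, i ≠ j → l i ≠ l j)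
    (hl0 : ∀ j ∈ Finset.range m, l j ≠ 0) (hc : ∀ j, j < m → 0 < c j) (μ : ℝ)
    (hP : (∏ j ∈ Finset.range m, (μ - l j)) +
        2 * ∑ j ∈ Finset.range m, l j * c j * ∏ k ∈ (Finset.range m).erase j, (μ - l k) = 0) :
    ∀ j ∈ Finset.range m, μ ≠ l j := by
  intro j hj hμ
  have hprod : ∏ k ∈ Finset.range m, (μ - l k) = 0 :=
    Finset.prod_eq_zero hj (by rw [hμ, sub_self])
  have hsum : ∑ j' ∈ Finset.range m, l j' * c j' * ∏ k ∈ (Finset.range m).erase j', (μ - l k)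
      = l j * c j * ∏ k ∈ (Finset.range m).erase j, (μ - l k) := by
    apply Finset.sum_eq_single_of_mem j hj
    intro j' hj' hne
    have hmem : j ∈ (Finset.range m).erase j' := Finset.mem_erase.mpr ⟨(Ne.symm hne), hj⟩
    rw [Finset.prod_eq_zero hmem (by rw [hμ, sub_self]), mul_zero]
  rw [hprod, hsum, zero_add] at hP
  have hne : l j * c j * ∏ k ∈ (Finset.range m).erase j, (μ - l k) ≠ 0 := by
    apply mul_ne_zero
    · exact mul_ne_zero (hl0 j hj) (hc j (Finset.mem_range.mp hj)).ne'
    · apply Finset.prod_ne_zero_iff.mpr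
      intro k hk
      have hk' := Finset.mem_erase.mp hk
      rw [hμ]; exact sub_ne_zero.mpr (hlne j hj k hk'.2 (Ne.symm hk'.1))
  rcases mul_eq_zero.mp hP with h | h
  · norm_num at h
  · exact hne h

/-- For `λ_0 < 0 < λ_1 < … < λ_{m-1}` (pairwise distinct, nonzero) and positive
`c_j`, the polynomial `P(t) = ∏_j (t - λ_j) + 2 ∑_j λ_j c_j ∏_{k≠j} (t - λ_k)` has at most one
real multiple root: there are no two distinct reals at which both `P` and `P′` vanish. -/
theorem at_most_one_multiple_root (m : ℕ) (hm : 2 ≤ m) (l : ℕ → ℝ)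
    (hneg : l 0 < 0) (hpos : 0 < l 1) (hmono : ∀ i j, i < j → j < m → l i < l j)
    (c : ℕ → ℝ) (hc : ∀ j, j < m → 0 < c j) :
    let P : ℝ → ℝ := fun t =>
      (∏ j ∈ Finset.range m, (t - l j)) +
        2 * ∑ j ∈ Finset.range m, l j * c j * ∏ k ∈ (Finset.range m).erase j, (t - l k)
    ¬ ∃ μ μ' : ℝ, μ ≠ μ' ∧ P μ = 0 ∧ deriv P μ = 0 ∧ P μ' = 0 ∧ deriv P μ' = 0 := by
  intro P
  rintro ⟨μ, μ', hne, h1, h2, h3, h4⟩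
  -- basic facts about l
  have hlpos : ∀ j, 1 ≤ j → j < m → 0 < l j := by
    intro j h1j hj
    rcases eq_or_lt_of_le h1j with h | h
    · rw [← h]; exact hpos
    · exact hpos.trans (hmono 1 j h hj)
  have hl0 : ∀ j ∈ Finset.range m, l j ≠ 0 := by
    intro j hj
    rcases Nat.eq_zero_or_pos j with h | h
    · rw [h]; exact hneg.ne
    · exact (hlpos j h (Finset.mem_range.mp hj)).ne'
  have hlne : ∀ i ∈ Finset.range m, ∀ j ∈ Finset.range m, i ≠ j → l i ≠ l j := by
    intro i hi j hj hij
    rcases hij.lt_or_gt with h | h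
    · exact (hmono i j h (Finset.mem_range.mp hj)).ne
    · exact (hmono j i h (Finset.mem_range.mp hi)).ne'
  have hμ : ∀ j ∈ Finset.range m, μ ≠ l j := root_ne m l c hlne hl0 hc μ h1
  have hμ' : ∀ j ∈ Finset.range m, μ' ≠ l j := root_ne m l c hlne hl0 hc μ' h3
  obtain ⟨A1, B1⟩ := key_facts m l c μ hμ h1 h2
  obtain ⟨A2, B2⟩ := key_facts m l c μ' hμ' h3 h4
  have hy0 : ∀ j ∈ Finset.range m, μ - l j ≠ 0 := fun j hj => sub_ne_zero.mpr (hμ j hj)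
  have hz0 : ∀ j ∈ Finset.range m, μ' - l j ≠ 0 := fun j hj => sub_ne_zero.mpr (hμ' j hj)
  -- cross sum is zero
  have hC : ∑ j ∈ Finset.range m, l j * c j * ((μ - l j)⁻¹ * (μ' - l j)⁻¹) = 0 := by
    have hyz : ∀ j ∈ Finset.range m,
        (μ - l j)⁻¹ - (μ' - l j)⁻¹ = (μ' - μ) * ((μ - l j)⁻¹ * (μ' - l j)⁻¹) := by
      intro j hj
      have ha := hy0 j hj
      have hb := hz0 j hj
      rw [inv_sub_inv ha hb, div_eq_mul_inv, mul_inv]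
      ring_nf
    have e : ∑ j ∈ Finset.range m, (l j * c j * (μ - l j)⁻¹ - l j * c j * (μ' - l j)⁻¹)
        = (μ' - μ) * ∑ j ∈ Finset.range m, l j * c j * ((μ - l j)⁻¹ * (μ' - l j)⁻¹) := by
      rw [Finset.mul_sum]
      refine Finset.sum_congr rfl fun j hj => ?_
      have := hyz j hj
      linear_combination (l j * c j) * this
    rw [Finset.sum_sub_distrib, A1, A2] at e
    have e0 : (μ' - μ) * ∑ j ∈ Finset.range m, l j * c j * ((μ - l j)⁻¹ * (μ' - l j)⁻¹) = 0 := by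
      rw [← e]; ring
    exact (mul_eq_zero.mp e0).resolve_left (sub_ne_zero.mpr (Ne.symm hne))
  -- split off j = 0
  have h0m : (0 : ℕ) ∈ Finset.range m := Finset.mem_range.mpr (by omega)
  have h1E : (1 : ℕ) ∈ (Finset.range m).erase 0 :=
    Finset.mem_erase.mpr ⟨one_ne_zero, Finset.mem_range.mpr (by omega)⟩
  have e1 : ∑ j ∈ (Finset.range m).erase 0, l j * c j * ((μ - l j)⁻¹)^2
      = -(l 0 * c 0 * ((μ - l 0)⁻¹)^2) := by
    have := Finset.add_sum_erase (Finset.range m) (fun j => l j * c j * ((μ - l j)⁻¹)^2) h0m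
    rw [B1] at this
    linarith
  have e2 : ∑ j ∈ (Finset.range m).erase 0, l j * c j * ((μ' - l j)⁻¹)^2
      = -(l 0 * c 0 * ((μ' - l 0)⁻¹)^2) := by
    have := Finset.add_sum_erase (Finset.range m) (fun j => l j * c j * ((μ' - l j)⁻¹)^2) h0m
    rw [B2] at this
    linarith
  have e3 : ∑ j ∈ (Finset.range m).erase 0, l j * c j * ((μ - l j)⁻¹ * (μ' - l j)⁻¹)
      = -(l 0 * c 0 * ((μ - l 0)⁻¹ * (μ' - l 0)⁻¹)) := by
    have := Finset.add_sum_erase (Finset.range m)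
      (fun j => l j * c j * ((μ - l j)⁻¹ * (μ' - l j)⁻¹)) h0m
    rw [hC] at this
    linarith
  -- the key nonnegative sum is zero
  have hTzero : ∑ j ∈ (Finset.range m).erase 0,
      l j * c j * ((μ' - l 0)⁻¹ * (μ - l j)⁻¹ - (μ - l 0)⁻¹ * (μ' - l j)⁻¹)^2 = 0 := by
    have expand : ∑ j ∈ (Finset.range m).erase 0,
        l j * c j * ((μ' - l 0)⁻¹ * (μ - l j)⁻¹ - (μ - l 0)⁻¹ * (μ' - l j)⁻¹)^2
        = ((μ' - l 0)⁻¹)^2 * (∑ j ∈ (Finset.range m).erase 0, l j * c j * ((μ - l j)⁻¹)^2)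
          - 2 * ((μ - l 0)⁻¹ * (μ' - l 0)⁻¹) *
            (∑ j ∈ (Finset.range m).erase 0, l j * c j * ((μ - l j)⁻¹ * (μ' - l j)⁻¹))
          + ((μ - l 0)⁻¹)^2 * (∑ j ∈ (Finset.range m).erase 0, l j * c j * ((μ' - l j)⁻¹)^2) := by
      rw [Finset.mul_sum, Finset.mul_sum, Finset.mul_sum, ← Finset.sum_sub_distrib,
        ← Finset.sum_add_distrib]
      exact Finset.sum_congr rfl fun j hj => by ring
    rw [expand, e1, e2, e3]
    ring
  have hnn : ∀ j ∈ (Finset.range m).erase 0,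
      0 ≤ l j * c j * ((μ' - l 0)⁻¹ * (μ - l j)⁻¹ - (μ - l 0)⁻¹ * (μ' - l j)⁻¹)^2 := by
    intro j hj
    obtain ⟨hj0, hjm⟩ := Finset.mem_erase.mp hj
    have hlj : 0 < l j := hlpos j (Nat.one_le_iff_ne_zero.mpr hj0) (Finset.mem_range.mp hjm)
    have hcj : 0 < c j := hc j (Finset.mem_range.mp hjm)
    positivity
  have hterm1 := (Finset.sum_eq_zero_iff_of_nonneg hnn).mp hTzero 1 h1E
  have hl1 : 0 < l 1 := hpos
  have hc1 : 0 < c 1 := hc 1 (by omega)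
  have hbase : (μ' - l 0)⁻¹ * (μ - l 1)⁻¹ - (μ - l 0)⁻¹ * (μ' - l 1)⁻¹ = 0 := by
    have hsq : ((μ' - l 0)⁻¹ * (μ - l 1)⁻¹ - (μ - l 0)⁻¹ * (μ' - l 1)⁻¹)^2 = 0 := by
      rcases mul_eq_zero.mp hterm1 with h | h
      · exact absurd h (mul_pos hl1 hc1).ne'
      · exact h
    exact pow_eq_zero_iff (by norm_num) |>.mp hsq
  -- derive l 1 = l 0
  have h1m : (1 : ℕ) ∈ Finset.range m := Finset.mem_range.mpr (by omega)
  have ha := hy0 0 h0m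
  have hb := hy0 1 h1m
  have hd := hz0 0 h0m
  have he := hz0 1 h1m
  have hfin : (μ - l 0) * (μ' - l 1) = (μ' - l 0) * (μ - l 1) := by
    field_simp at hbase
    linarith [hbase]
  have hkey : (μ' - μ) * (l 1 - l 0) = 0 := by linear_combination hfin
  rcases mul_eq_zero.mp hkey with h | h
  · exact hne (by linarith [sub_eq_zero.mp h])
  · have := sub_eq_zero.mp h
    linarith
end
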